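/- arXiv:1906.00620 — 3 statements merged into one kernel-verified Lean document; each statement's English description precedes it below -/
import Mathlib

section
/- Let k ≥ r ≥ 2 be integers and set T = 3^(k-r+1). Let S = (P, B) be a Steiner triple system on 3^k points admitting a (k,r)-decomposition, i.e. a partition of P into 3^(r-1) groups G_x of size T indexed by the vectors x of (ZMod 3)^(r-1). Suppose that (a) for every group G_x, the sub-Steiner triple system on G_x formed by the blocks contained in G_x is resolvable, and (b) for every line {x,y,z} of AG(r-1,3), the Latin square of order T defined by the transversal design whose blocks are the blocks of B meeting all three of G_x, G_y, G_z has an orthogonal mate. Then S is resolvable; in particular B can be partitioned into (3^k − 1)/2 parallel classes. -/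
/-- A Steiner triple system on the point type `P`: a collection of 3-element
subsets (blocks) such that every pair of distinct points lies in exactly one block. -/
def IsSTS {P : Type*} [DecidableEq P] (B : Finset (Finset P)) : Prop :=
  (∀ b ∈ B, b.card = 3) ∧
  ∀ p q : P, p ≠ q → ∃! b, b ∈ B ∧ p ∈ b ∧ q ∈ b

/-- A Steiner triple system on the point set `s ⊆ P`. -/
def IsSTSOn {P : Type*} [DecidableEq P] (s : Finset P) (B : Finset (Finset P)) : Prop :=
  (∀ b ∈ B, b ⊆ s ∧ b.card = 3) ∧
  ∀ p ∈ s, ∀ q ∈ s, p ≠ q → ∃! b, b ∈ B ∧ p ∈ b ∧ q ∈ b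

/-- A parallel class of the point set `s`: pairwise disjoint subsets whose union is `s`. -/
def IsParallelClassOn {P : Type*} [DecidableEq P] (s : Finset P)
    (C : Finset (Finset P)) : Prop :=
  (∀ b ∈ C, ∀ b' ∈ C, b ≠ b' → Disjoint b b') ∧ C.biUnion id = s

/-- A block collection on the point set `s` is resolvable if it can be partitioned into
parallel classes of `s`. -/
def IsResolvableOn {P : Type*} [DecidableEq P] (s : Finset P)
    (B : Finset (Finset P)) : Prop :=
  ∃ F : Finpartition B, ∀ C ∈ F.parts, IsParallelClassOn s C

/-- A parallel class: a collection of pairwise disjoint subsets whose union is everything. -/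
def IsParallelClass {P : Type*} [Fintype P] [DecidableEq P] (C : Finset (Finset P)) : Prop :=
  (∀ b ∈ C, ∀ b' ∈ C, b ≠ b' → Disjoint b b') ∧ C.biUnion id = Finset.univ

/-- A block collection is resolvable if it can be partitioned into parallel classes. -/
def IsResolvable {P : Type*} [Fintype P] [DecidableEq P] (B : Finset (Finset P)) : Prop :=
  ∃ F : Finpartition B, ∀ C ∈ F.parts, IsParallelClass C

/-- A Latin square of order `n`: each row and each column is a bijection. -/
def IsLatinSquare {n : ℕ} (L : Fin n → Fin n → Fin n) : Prop :=
  (∀ i, Function.Bijective fun j => L i j) ∧ (∀ j, Function.Bijective fun i => L i j)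

/-- Two Latin squares are orthogonal if superimposing them yields all ordered
pairs without repetition. -/
def AreOrthogonal {n : ℕ} (L M : Fin n → Fin n → Fin n) : Prop :=
  Function.Injective fun p : Fin n × Fin n => (L p.1 p.2, M p.1 p.2)

open Finset in
lemma sts_on_card {P : Type*} [DecidableEq P] {s : Finset P} {B : Finset (Finset P)}
    (h : IsSTSOn s B) : 6 * B.card = s.card * (s.card - 1) := by
  classical
  set f : P × P → Finset P := fun pq =>
    if hpq : ∃! b, b ∈ B ∧ pq.1 ∈ b ∧ pq.2 ∈ b then hpq.choose else ∅ with hf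
  have hfprop : ∀ pq ∈ s.offDiag, f pq ∈ B ∧ pq.1 ∈ f pq ∧ pq.2 ∈ f pq ∧
      ∀ b ∈ B, pq.1 ∈ b → pq.2 ∈ b → f pq = b := by
    intro pq hpq
    rw [Finset.mem_offDiag] at hpq
    have hex := h.2 pq.1 hpq.1 pq.2 hpq.2.1 hpq.2.2
    rw [hf]
    simp only [dif_pos hex]
    refine ⟨hex.choose_spec.1.1, hex.choose_spec.1.2.1, hex.choose_spec.1.2.2, ?_⟩
    intro b hb h1 h2
    exact (hex.choose_spec.2 b ⟨hb, h1, h2⟩).symm ▸ rfl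
  have hcard := Finset.card_eq_sum_card_fiberwise (f := f) (s := s.offDiag) (t := B)
    (fun pq hpq => (hfprop pq hpq).1)
  have hfiber : ∀ b ∈ B, (s.offDiag.filter (fun pq => f pq = b)) = b.offDiag := by
    intro b hb
    ext pq
    simp only [Finset.mem_filter, Finset.mem_offDiag]
    constructor
    · rintro ⟨hpq, hfb⟩
      have := hfprop pq (Finset.mem_offDiag.mpr hpq)
      exact ⟨hfb ▸ this.2.1, hfb ▸ this.2.2.1, hpq.2.2⟩
    · rintro ⟨h1, h2, hne⟩
      have hsub := (h.1 b hb).1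
      have hpq : pq ∈ s.offDiag := Finset.mem_offDiag.mpr ⟨hsub h1, hsub h2, hne⟩
      exact ⟨Finset.mem_offDiag.mp hpq, (hfprop pq hpq).2.2.2 b hb h1 h2⟩
  have hsum : s.offDiag.card = ∑ b ∈ B, b.offDiag.card := by
    rw [hcard]; exact Finset.sum_congr rfl (fun b hb => by rw [hfiber b hb])
  have h6 : ∀ b ∈ B, b.offDiag.card = 6 := by
    intro b hb
    rw [Finset.offDiag_card, (h.1 b hb).2]
  rw [Finset.sum_congr rfl h6, Finset.sum_const, smul_eq_mul, Finset.offDiag_card] at hsum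
  have : 0 ≤ s.card := Nat.zero_le _
  have hms : s.card * (s.card - 1) = s.card * s.card - s.card := by
    rw [Nat.mul_sub, mul_one]
  omega

lemma pc_card {P : Type*} [DecidableEq P] {s : Finset P} {C : Finset (Finset P)}
    (h : IsParallelClassOn s C) (h3 : ∀ b ∈ C, b.card = 3) : 3 * C.card = s.card := by
  classical
  have hc := Finset.card_biUnion (s := C) (t := id) h.1
  rw [← h.2, hc]
  simp only [id_eq]
  rw [Finset.sum_congr rfl (fun b hb => h3 b hb), Finset.sum_const, smul_eq_mul, mul_comm]

lemma res_count {P : Type*} [DecidableEq P] {s : Finset P} {B : Finset (Finset P)}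
    (hSTS : IsSTSOn s B) (hs : 0 < s.card) (F : Finpartition B)
    (hF : ∀ C ∈ F.parts, IsParallelClassOn s C) : 2 * F.parts.card = s.card - 1 := by
  classical
  have h1 := sts_on_card hSTS
  have h2 := F.sum_card_parts
  have h3 : ∀ C ∈ F.parts, 3 * C.card = s.card := by
    intro C hC
    exact pc_card (hF C hC) (fun b hb => (hSTS.1 b (F.le hC hb)).2)
  have h4 : 3 * B.card = F.parts.card * s.card := by
    rw [← h2, Finset.mul_sum]
    rw [Finset.sum_congr rfl h3, Finset.sum_const, smul_eq_mul]
  have h5 : s.card * (2 * F.parts.card) = s.card * (s.card - 1) := by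
    calc s.card * (2 * F.parts.card) = 2 * (F.parts.card * s.card) := by ring
    _ = 2 * (3 * B.card) := by rw [h4]
    _ = 6 * B.card := by ring
    _ = s.card * (s.card - 1) := h1
  exact Nat.eq_of_mul_eq_mul_left hs h5
lemma cross_structure {P : Type*} [DecidableEq P] {Gx Gy Gz : Finset P} {b : Finset P}
    (hxy : Disjoint Gx Gy) (hxz : Disjoint Gx Gz) (hyz : Disjoint Gy Gz)
    (hb3 : b.card = 3) (hx : (b ∩ Gx).Nonempty) (hy : (b ∩ Gy).Nonempty)
    (hz : (b ∩ Gz).Nonempty) :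
    ∃ p q t, p ∈ Gx ∧ q ∈ Gy ∧ t ∈ Gz ∧ b = {p, q, t} ∧
      b ∩ Gx = {p} ∧ b ∩ Gy = {q} ∧ b ∩ Gz = {t} := by
  classical
  obtain ⟨p, hp⟩ := hx
  obtain ⟨q, hq⟩ := hy
  obtain ⟨t, ht⟩ := hz
  rw [Finset.mem_inter] at hp hq ht
  have hpq : p ≠ q := fun h => Finset.disjoint_left.mp hxy hp.2 (h ▸ hq.2)
  have hpt : p ≠ t := fun h => Finset.disjoint_left.mp hxz hp.2 (h ▸ ht.2)
  have hqt : q ≠ t := fun h => Finset.disjoint_left.mp hyz hq.2 (h ▸ ht.2)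
  have hsub : ({p, q, t} : Finset P) ⊆ b := by
    intro u hu
    simp only [Finset.mem_insert, Finset.mem_singleton] at hu
    rcases hu with rfl | rfl | rfl
    exacts [hp.1, hq.1, ht.1]
  have hcard : ({p, q, t} : Finset P).card = 3 := by
    rw [Finset.card_insert_of_notMem (by simp [hpq, hpt]),
      Finset.card_insert_of_notMem (by simp [hqt]), Finset.card_singleton]
  have heq : ({p, q, t} : Finset P) = b :=
    Finset.eq_of_subset_of_card_le hsub (by rw [hb3, hcard])
  refine ⟨p, q, t, hp.2, hq.2, ht.2, heq.symm, ?_, ?_, ?_⟩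
  · ext u
    simp only [Finset.mem_inter, Finset.mem_singleton, ← heq, Finset.mem_insert]
    constructor
    · rintro ⟨rfl | rfl | rfl, hu⟩
      · rfl
      · exact (Finset.disjoint_left.mp hxy hu hq.2).elim
      · exact (Finset.disjoint_left.mp hxz hu ht.2).elim
    · rintro rfl; exact ⟨Or.inl rfl, hp.2⟩
  · ext u
    simp only [Finset.mem_inter, Finset.mem_singleton, ← heq, Finset.mem_insert]
    constructor
    · rintro ⟨rfl | rfl | rfl, hu⟩
      · exact (Finset.disjoint_left.mp hxy hp.2 hu).elim
      · rfl
      · exact (Finset.disjoint_left.mp hyz hu ht.2).elim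
    · rintro rfl; exact ⟨Or.inr (Or.inl rfl), hq.2⟩
  · ext u
    simp only [Finset.mem_inter, Finset.mem_singleton, ← heq, Finset.mem_insert]
    constructor
    · rintro ⟨rfl | rfl | rfl, hu⟩
      · exact (Finset.disjoint_left.mp hxz hp.2 hu).elim
      · exact (Finset.disjoint_left.mp hyz hq.2 hu).elim
      · rfl
    · rintro rfl; exact ⟨Or.inr (Or.inr rfl), ht.2⟩
lemma line_res {P : Type*} [DecidableEq P] {T : ℕ} {Gx Gy Gz : Finset P}
    (hxy : Disjoint Gx Gy) (hxz : Disjoint Gx Gz) (hyz : Disjoint Gy Gz)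
    (hcx : Gx.card = T) (hcy : Gy.card = T) (hcz : Gz.card = T)
    {B : Finset (Finset P)} (hb3 : ∀ b ∈ B, b.card = 3)
    (hTD : ∀ p ∈ Gx, ∀ q ∈ Gy, ∃! b, b ∈ B ∧ (b ∩ Gx).Nonempty ∧ (b ∩ Gy).Nonempty ∧
      (b ∩ Gz).Nonempty ∧ p ∈ b ∧ q ∈ b)
    (hmate : ∀ (φx : {p // p ∈ Gx} ≃ Fin T) (φy : {p // p ∈ Gy} ≃ Fin T)
      (φz : {p // p ∈ Gz} ≃ Fin T) (L : Fin T → Fin T → Fin T),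
      (∀ i j m, L i j = m ↔
        ({(φx.symm i : P), (φy.symm j : P), (φz.symm m : P)} : Finset P) ∈ B) →
      ∃ M, IsLatinSquare M ∧ AreOrthogonal L M) :
    ∃ κ : Fin T → Finset (Finset P),
      (∀ j, IsParallelClassOn (Gx ∪ Gy ∪ Gz) (κ j)) ∧
      (∀ j, ∀ b ∈ κ j, b ∈ B ∧ (b ∩ Gx).Nonempty ∧ (b ∩ Gy).Nonempty ∧ (b ∩ Gz).Nonempty) ∧
      (∀ j j', j ≠ j' → Disjoint (κ j) (κ j')) ∧
      (∀ b ∈ B, (b ∩ Gx).Nonempty → (b ∩ Gy).Nonempty → (b ∩ Gz).Nonempty → ∃ j, b ∈ κ j) := by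
  classical
  set φx := Gx.equivFinOfCardEq hcx with hφx
  set φy := Gy.equivFinOfCardEq hcy with hφy
  set φz := Gz.equivFinOfCardEq hcz with hφz
  -- existence and uniqueness of the third point
  have hL : ∀ i j : Fin T, ∃ m : Fin T,
      (({(φx.symm i : P), (φy.symm j : P), (φz.symm m : P)} : Finset P) ∈ B) ∧
      ∀ m' : Fin T,
        (({(φx.symm i : P), (φy.symm j : P), (φz.symm m' : P)} : Finset P) ∈ B) → m' = m := by
    intro i j
    set p : P := (φx.symm i : P) with hpdef
    set q : P := (φy.symm j : P) with hqdef
    have hp : p ∈ Gx := (φx.symm i).2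
    have hq : q ∈ Gy := (φy.symm j).2
    obtain ⟨b, ⟨hbB, hbx, hby, hbz, hpb, hqb⟩, huniq⟩ := hTD p hp q hq
    obtain ⟨p', q', t, hp', hq', ht, hbeq, hsx, hsy, hsz⟩ :=
      cross_structure hxy hxz hyz (hb3 b hbB) hbx hby hbz
    have hpp' : p = p' := by
      have : p ∈ b ∩ Gx := Finset.mem_inter.mpr ⟨hpb, hp⟩
      rwa [hsx, Finset.mem_singleton] at this
    have hqq' : q = q' := by
      have : q ∈ b ∩ Gy := Finset.mem_inter.mpr ⟨hqb, hq⟩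
      rwa [hsy, Finset.mem_singleton] at this
    refine ⟨φz ⟨t, ht⟩, ?_, ?_⟩
    · have hts : (φz.symm (φz ⟨t, ht⟩) : P) = t := by rw [Equiv.symm_apply_apply]
      show ({p, q, (φz.symm (φz ⟨t, ht⟩) : P)} : Finset P) ∈ B
      rw [hts, hpp', hqq', ← hbeq]
      exact hbB
    · intro m' hm'
      set s : P := (φz.symm m' : P) with hsdef
      have hs : s ∈ Gz := (φz.symm m').2
      have hcross : ({p, q, s} : Finset P) ∈ B ∧ (({p, q, s} : Finset P) ∩ Gx).Nonempty ∧
          (({p, q, s} : Finset P) ∩ Gy).Nonempty ∧ (({p, q, s} : Finset P) ∩ Gz).Nonempty ∧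
          p ∈ ({p, q, s} : Finset P) ∧ q ∈ ({p, q, s} : Finset P) := by
        refine ⟨hm', ⟨p, Finset.mem_inter.mpr ⟨by simp, hp⟩⟩,
          ⟨q, Finset.mem_inter.mpr ⟨by simp, hq⟩⟩,
          ⟨s, Finset.mem_inter.mpr ⟨by simp, hs⟩⟩, by simp, by simp⟩
      have hbs : ({p, q, s} : Finset P) = b := huniq _ hcross
      have : s ∈ b ∩ Gz := Finset.mem_inter.mpr ⟨by rw [← hbs]; simp, hs⟩
      rw [hsz, Finset.mem_singleton] at this
      have : φz.symm m' = ⟨t, ht⟩ := Subtype.ext this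
      rw [← this, Equiv.apply_symm_apply]
  choose L hL1 hL2 using hL
  have hLiff : ∀ i j m, L i j = m ↔
      ({(φx.symm i : P), (φy.symm j : P), (φz.symm m : P)} : Finset P) ∈ B := by
    intro i j m
    constructor
    · rintro rfl; exact hL1 i j
    · intro h; exact (hL2 i j m h).symm
  obtain ⟨M, hMlatin, hOrth⟩ := hmate φx φy φz L hLiff
  -- the blocks of the transversal design
  set blockOf : Fin T × Fin T → Finset P := fun c =>
    {(φx.symm c.1 : P), (φy.symm c.2 : P), (φz.symm (L c.1 c.2) : P)} with hblockOf
  have hbomem : ∀ c, blockOf c ∈ B := fun c => (hLiff c.1 c.2 _).mp rfl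
  have hbopx : ∀ c, (φx.symm c.1 : P) ∈ blockOf c := fun c => by simp [hblockOf]
  have hbopy : ∀ c, (φy.symm c.2 : P) ∈ blockOf c := fun c => by simp [hblockOf]
  have hbopz : ∀ c, (φz.symm (L c.1 c.2) : P) ∈ blockOf c := fun c => by simp [hblockOf]
  have hbox : ∀ c, blockOf c ∩ Gx = {(φx.symm c.1 : P)} := by
    intro c
    obtain ⟨p', q', t', _, _, _, _, hsx, _, _⟩ := cross_structure hxy hxz hyz
      (hb3 _ (hbomem c)) ⟨_, Finset.mem_inter.mpr ⟨hbopx c, (φx.symm c.1).2⟩⟩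
      ⟨_, Finset.mem_inter.mpr ⟨hbopy c, (φy.symm c.2).2⟩⟩
      ⟨_, Finset.mem_inter.mpr ⟨hbopz c, (φz.symm (L c.1 c.2)).2⟩⟩
    have : (φx.symm c.1 : P) ∈ blockOf c ∩ Gx :=
      Finset.mem_inter.mpr ⟨hbopx c, (φx.symm c.1).2⟩
    rw [hsx] at this ⊢
    rw [Finset.mem_singleton] at this
    rw [this]
  have hboy : ∀ c, blockOf c ∩ Gy = {(φy.symm c.2 : P)} := by
    intro c
    obtain ⟨p', q', t', _, _, _, _, _, hsy, _⟩ := cross_structure hxy hxz hyz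
      (hb3 _ (hbomem c)) ⟨_, Finset.mem_inter.mpr ⟨hbopx c, (φx.symm c.1).2⟩⟩
      ⟨_, Finset.mem_inter.mpr ⟨hbopy c, (φy.symm c.2).2⟩⟩
      ⟨_, Finset.mem_inter.mpr ⟨hbopz c, (φz.symm (L c.1 c.2)).2⟩⟩
    have : (φy.symm c.2 : P) ∈ blockOf c ∩ Gy :=
      Finset.mem_inter.mpr ⟨hbopy c, (φy.symm c.2).2⟩
    rw [hsy] at this ⊢
    rw [Finset.mem_singleton] at this
    rw [this]
  have hboz : ∀ c, blockOf c ∩ Gz = {(φz.symm (L c.1 c.2) : P)} := by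
    intro c
    obtain ⟨p', q', t', _, _, _, _, _, _, hsz⟩ := cross_structure hxy hxz hyz
      (hb3 _ (hbomem c)) ⟨_, Finset.mem_inter.mpr ⟨hbopx c, (φx.symm c.1).2⟩⟩
      ⟨_, Finset.mem_inter.mpr ⟨hbopy c, (φy.symm c.2).2⟩⟩
      ⟨_, Finset.mem_inter.mpr ⟨hbopz c, (φz.symm (L c.1 c.2)).2⟩⟩
    have : (φz.symm (L c.1 c.2) : P) ∈ blockOf c ∩ Gz :=
      Finset.mem_inter.mpr ⟨hbopz c, (φz.symm (L c.1 c.2)).2⟩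
    rw [hsz] at this ⊢
    rw [Finset.mem_singleton] at this
    rw [this]
  have hboinj : ∀ c c', blockOf c = blockOf c' → c = c' := by
    intro c c' h
    have h1 : (φx.symm c.1 : P) = (φx.symm c'.1 : P) := by
      have := hbox c
      rw [h, hbox c'] at this
      exact (Finset.singleton_injective this).symm
    have h2 : (φy.symm c.2 : P) = (φy.symm c'.2 : P) := by
      have := hboy c
      rw [h, hboy c'] at this
      exact (Finset.singleton_injective this).symm
    have e1 : c.1 = c'.1 := by
      have := φx.symm.injective (Subtype.ext h1)
      exact this
    have e2 : c.2 = c'.2 := by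
      have := φy.symm.injective (Subtype.ext h2)
      exact this
    exact Prod.ext e1 e2
  set κ : Fin T → Finset (Finset P) := fun j =>
    (Finset.univ.filter (fun c : Fin T × Fin T => M c.1 c.2 = j)).image blockOf with hκ
  have hκmem : ∀ j b, b ∈ κ j ↔ ∃ c, M c.1 c.2 = j ∧ blockOf c = b := by
    intro j b
    simp only [hκ, Finset.mem_image, Finset.mem_filter, Finset.mem_univ, true_and]
  refine ⟨κ, ?_, ?_, ?_, ?_⟩
  · -- parallel class
    intro j
    constructor
    · intro b hb b' hb' hne
      obtain ⟨c, hMc, rfl⟩ := (hκmem j b).mp hb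
      obtain ⟨c', hMc', rfl⟩ := (hκmem j b').mp hb'
      have hcc' : c ≠ c' := fun h => hne (h ▸ rfl)
      have hc1 : c.1 ≠ c'.1 := by
        intro h
        apply hcc'
        have : c.2 = c'.2 := (hMlatin.1 c.1).1
          (by show M c.1 c.2 = M c.1 c'.2; rw [hMc, h, hMc'])
        exact Prod.ext h this
      have hc2 : c.2 ≠ c'.2 := by
        intro h
        apply hcc'
        have : c.1 = c'.1 := (hMlatin.2 c.2).1
          (by show M c.1 c.2 = M c'.1 c.2; rw [hMc, h, hMc'])
        exact Prod.ext this h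
      have hcL : L c.1 c.2 ≠ L c'.1 c'.2 := by
        intro h
        apply hcc'
        exact hOrth (by simp [h, hMc, hMc'] : _ = _)
      rw [Finset.disjoint_left]
      intro u hu hu'
      have humem : u ∈ Gx ∪ Gy ∪ Gz := by
        have : u ∈ blockOf c := hu
        simp only [hblockOf, Finset.mem_insert, Finset.mem_singleton] at this
        rcases this with rfl | rfl | rfl
        · exact Finset.mem_union.mpr (Or.inl (Finset.mem_union.mpr (Or.inl (φx.symm c.1).2)))
        · exact Finset.mem_union.mpr (Or.inl (Finset.mem_union.mpr (Or.inr (φy.symm c.2).2)))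
        · exact Finset.mem_union.mpr (Or.inr (φz.symm (L c.1 c.2)).2)
      rcases Finset.mem_union.mp humem with h1 | h1
      · rcases Finset.mem_union.mp h1 with h2 | h2
        · have e1 : u = (φx.symm c.1 : P) := by
            have := Finset.mem_inter.mpr ⟨hu, h2⟩
            rwa [hbox c, Finset.mem_singleton] at this
          have e2 : u = (φx.symm c'.1 : P) := by
            have := Finset.mem_inter.mpr ⟨hu', h2⟩
            rwa [hbox c', Finset.mem_singleton] at this
          exact hc1 (φx.symm.injective (Subtype.ext (e1 ▸ e2)))
        · have e1 : u = (φy.symm c.2 : P) := by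
            have := Finset.mem_inter.mpr ⟨hu, h2⟩
            rwa [hboy c, Finset.mem_singleton] at this
          have e2 : u = (φy.symm c'.2 : P) := by
            have := Finset.mem_inter.mpr ⟨hu', h2⟩
            rwa [hboy c', Finset.mem_singleton] at this
          exact hc2 (φy.symm.injective (Subtype.ext (e1 ▸ e2)))
      · have e1 : u = (φz.symm (L c.1 c.2) : P) := by
          have := Finset.mem_inter.mpr ⟨hu, h1⟩
          rwa [hboz c, Finset.mem_singleton] at this
        have e2 : u = (φz.symm (L c'.1 c'.2) : P) := by
          have := Finset.mem_inter.mpr ⟨hu', h1⟩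
          rwa [hboz c', Finset.mem_singleton] at this
        exact hcL (φz.symm.injective (Subtype.ext (e1 ▸ e2)))
    · apply Finset.Subset.antisymm
      · intro u hu
        rw [Finset.mem_biUnion] at hu
        obtain ⟨b, hb, hub⟩ := hu
        obtain ⟨c, hMc, rfl⟩ := (hκmem j b).mp hb
        simp only [id] at hub
        simp only [hblockOf, Finset.mem_insert, Finset.mem_singleton] at hub
        rcases hub with rfl | rfl | rfl
        · exact Finset.mem_union.mpr (Or.inl (Finset.mem_union.mpr (Or.inl (φx.symm c.1).2)))
        · exact Finset.mem_union.mpr (Or.inl (Finset.mem_union.mpr (Or.inr (φy.symm c.2).2)))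
        · exact Finset.mem_union.mpr (Or.inr (φz.symm (L c.1 c.2)).2)
      · intro u hu
        rw [Finset.mem_biUnion]
        rcases Finset.mem_union.mp hu with h1 | h1
        · rcases Finset.mem_union.mp h1 with h2 | h2
          · set i := φx ⟨u, h2⟩ with hi
            obtain ⟨j', hj'⟩ := (hMlatin.1 i).2 j
            refine ⟨blockOf (i, j'), (hκmem j _).mpr ⟨(i, j'), hj', rfl⟩, ?_⟩
            have : (φx.symm i : P) = u := by rw [hi, Equiv.symm_apply_apply]
            simpa [id, this] using hbopx (i, j')
          · set j₂ := φy ⟨u, h2⟩ with hj₂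
            obtain ⟨i, hi⟩ := (hMlatin.2 j₂).2 j
            refine ⟨blockOf (i, j₂), (hκmem j _).mpr ⟨(i, j₂), hi, rfl⟩, ?_⟩
            have : (φy.symm j₂ : P) = u := by rw [hj₂, Equiv.symm_apply_apply]
            simpa [id, this] using hbopy (i, j₂)
        · set m := φz ⟨u, h1⟩ with hm
          have hsurj : Function.Surjective
              (fun c : Fin T × Fin T => (L c.1 c.2, M c.1 c.2)) :=
            Finite.surjective_of_injective hOrth
          obtain ⟨c, hc⟩ := hsurj (m, j)
          rw [Prod.mk.injEq] at hc
          refine ⟨blockOf c, (hκmem j _).mpr ⟨c, hc.2, rfl⟩, ?_⟩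
          have : (φz.symm (L c.1 c.2) : P) = u := by rw [hc.1, hm, Equiv.symm_apply_apply]
          simpa [id, this] using hbopz c
  · -- membership in B and crossness
    intro j b hb
    obtain ⟨c, _, rfl⟩ := (hκmem j b).mp hb
    exact ⟨hbomem c, ⟨_, Finset.mem_inter.mpr ⟨hbopx c, (φx.symm c.1).2⟩⟩,
      ⟨_, Finset.mem_inter.mpr ⟨hbopy c, (φy.symm c.2).2⟩⟩,
      ⟨_, Finset.mem_inter.mpr ⟨hbopz c, (φz.symm (L c.1 c.2)).2⟩⟩⟩
  · -- classes pairwise disjoint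
    intro j j' hne
    rw [Finset.disjoint_left]
    intro b hb hb'
    obtain ⟨c, hMc, rfl⟩ := (hκmem j b).mp hb
    obtain ⟨c', hMc', heq⟩ := (hκmem j' _).mp hb'
    have hcc : c' = c := hboinj c' c heq
    exact hne (by rw [← hMc, ← hMc', hcc])
  · -- coverage
    intro b hbB hbx hby hbz
    obtain ⟨p, q, t, hp, hq, ht, hbeq, _, _, _⟩ :=
      cross_structure hxy hxz hyz (hb3 b hbB) hbx hby hbz
    set i := φx ⟨p, hp⟩ with hi
    set j₂ := φy ⟨q, hq⟩ with hj₂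
    set m := φz ⟨t, ht⟩ with hm
    have hpts : (φx.symm i : P) = p ∧ (φy.symm j₂ : P) = q ∧ (φz.symm m : P) = t := by
      refine ⟨?_, ?_, ?_⟩ <;> simp [hi, hj₂, hm]
    have hLm : L i j₂ = m := by
      rw [hLiff i j₂ m, hpts.1, hpts.2.1, hpts.2.2, ← hbeq]
      exact hbB
    refine ⟨M i j₂, (hκmem _ _).mpr ⟨(i, j₂), rfl, ?_⟩⟩
    show ({(φx.symm i : P), (φy.symm j₂ : P), (φz.symm (L i j₂) : P)} : Finset P) = b
    rw [hLm, hpts.1, hpts.2.1, hpts.2.2, hbeq]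
namespace STSAux

variable {m : ℕ}

lemma three_nsmul (v : Fin m → ZMod 3) : v + v + v = 0 := by
  funext i
  show v i + v i + v i = 0
  have : ∀ x : ZMod 3, x + x + x = 0 := by decide
  exact this (v i)

lemma two_eq_neg (d : Fin m → ZMod 3) : d + d = -d :=
  eq_neg_of_add_eq_zero_left (three_nsmul d)

lemma neg_ne_self {d : Fin m → ZMod 3} (hd : d ≠ 0) : d ≠ -d := by
  intro h
  apply hd
  have h2 : d + d = 0 := by nth_rewrite 2 [h]; simp
  have h3 := three_nsmul d
  rw [h2, zero_add] at h3
  exact h3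

def lineSet (d v : Fin m → ZMod 3) : Finset (Fin m → ZMod 3) := {v, v + d, v + d + d}

lemma mem_lineSet_self (d v : Fin m → ZMod 3) : v ∈ lineSet d v := by
  simp [lineSet]

lemma lineSet_rot (d v : Fin m → ZMod 3) : lineSet d (v + d) = lineSet d v := by
  have h3 : v + d + d + d = v := by
    have := three_nsmul d
    calc v + d + d + d = v + (d + d + d) := by abel
    _ = v := by rw [this, add_zero]
  unfold lineSet
  ext w
  simp only [Finset.mem_insert, Finset.mem_singleton, h3]
  tauto

lemma lineSet_eq_of_mem {d v w : Fin m → ZMod 3} (h : w ∈ lineSet d v) :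
    lineSet d w = lineSet d v := by
  simp only [lineSet, Finset.mem_insert, Finset.mem_singleton] at h
  rcases h with rfl | rfl | rfl
  · rfl
  · exact lineSet_rot d v
  · rw [lineSet_rot d (v + d), lineSet_rot d v]

lemma lineSet_neg (d v : Fin m → ZMod 3) : lineSet (-d) v = lineSet d v := by
  have h2 : v + -d + -d = v + d := by
    have h3 := three_nsmul d
    calc v + -d + -d = v + d - (d + d + d) := by abel
    _ = v + d := by rw [h3, sub_zero]
  have h1 : v + -d = v + d + d := by
    have h3 := three_nsmul d
    calc v + -d = v + d + d - (d + d + d) := by abel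
    _ = v + d + d := by rw [h3, sub_zero]
  unfold lineSet
  rw [h2, h1]
  ext w
  simp only [Finset.mem_insert, Finset.mem_singleton]
  tauto

lemma lineSet_direction {d d' a a' : Fin m → ZMod 3} (hd' : d' ≠ 0)
    (h : lineSet d a = lineSet d' a') : d' = d ∨ d' = -d := by
  have h1 : a' ∈ lineSet d a := by rw [h]; exact mem_lineSet_self d' a'
  have h2 : a' + d' ∈ lineSet d a := by
    rw [h]; simp [lineSet]
  simp only [lineSet, Finset.mem_insert, Finset.mem_singleton] at h1 h2
  have h2d := two_eq_neg d
  rcases h1 with he | he | he <;>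
    rcases h2 with he2 | he2 | he2 <;> rw [he] at he2
  · exfalso; apply hd'
    have key : (0 : Fin m → ZMod 3) + d' = 0 := by
      apply add_left_cancel (a := a)
      calc a + (0 + d') = a + d' := by abel
      _ = a := he2
      _ = a + 0 := (add_zero a).symm
    rwa [zero_add] at key
  · left
    exact add_left_cancel he2
  · right
    have key : d' = d + d := add_left_cancel (he2.trans (add_assoc a d d))
    rw [key, h2d]
  · right
    have key : d + d' = 0 := by
      apply add_left_cancel (a := a)
      calc a + (d + d') = a + d + d' := by abel
      _ = a := he2
      _ = a + 0 := (add_zero a).symm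
    exact eq_neg_of_add_eq_zero_right key
  · exfalso; apply hd'
    exact add_left_cancel (he2.trans (add_zero (a + d)).symm)
  · left
    exact add_left_cancel he2
  · left
    have key : d + d + d' = 0 := by
      apply add_left_cancel (a := a)
      calc a + (d + d + d') = a + d + d + d' := by abel
      _ = a := he2
      _ = a + 0 := (add_zero a).symm
    have := eq_neg_of_add_eq_zero_right key
    rw [this, h2d, neg_neg]
  · right
    have key : d + d + d' = d := by
      apply add_left_cancel (a := a)
      calc a + (d + d + d') = a + d + d + d' := by abel
      _ = a + d := he2
    have hthis : d' = d - (d + d) := by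
      rw [eq_sub_iff_add_eq, add_comm]
      exact key
    rw [hthis, h2d, sub_neg_eq_add, h2d]
  · exfalso; apply hd'
    exact add_left_cancel (he2.trans (add_zero (a + d + d)).symm)

noncomputable def emb {m : ℕ} : (Fin m → ZMod 3) ≃ Fin (Fintype.card (Fin m → ZMod 3)) :=
  Fintype.equivFin _

noncomputable def base (d v : Fin m → ZMod 3) : Fin m → ZMod 3 :=
  emb.symm (((lineSet d v).image emb).min'
    ⟨emb v, Finset.mem_image_of_mem _ (mem_lineSet_self d v)⟩)

lemma base_mem (d v : Fin m → ZMod 3) : base d v ∈ lineSet d v := by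
  have := Finset.min'_mem ((lineSet d v).image emb)
    ⟨emb v, Finset.mem_image_of_mem _ (mem_lineSet_self d v)⟩
  obtain ⟨w, hw, hwe⟩ := Finset.mem_image.mp this
  unfold base
  rw [← hwe, Equiv.symm_apply_apply]
  exact hw

lemma base_congr {d v w : Fin m → ZMod 3} (h : lineSet d v = lineSet d w) :
    base d v = base d w := by
  unfold base
  simp only [h]

lemma base_idem (d v : Fin m → ZMod 3) : base d (base d v) = base d v :=
  base_congr (lineSet_eq_of_mem (base_mem d v))

noncomputable def Dset (m : ℕ) : Finset (Fin m → ZMod 3) :=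
  Finset.univ.filter (fun v => v ≠ 0 ∧ emb v < emb (-v))

lemma mem_Dset {d : Fin m → ZMod 3} : d ∈ Dset m ↔ d ≠ 0 ∧ emb d < emb (-d) := by
  unfold Dset
  rw [Finset.mem_filter]
  simp

lemma Dset_ne_zero {d : Fin m → ZMod 3} (h : d ∈ Dset m) : d ≠ 0 :=
  (mem_Dset.mp h).1

lemma Dset_total {d : Fin m → ZMod 3} (hd : d ≠ 0) : d ∈ Dset m ∨ -d ∈ Dset m := by
  classical
  have hne : emb d ≠ emb (-d) := fun h => neg_ne_self hd (emb.injective h)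
  rcases lt_or_gt_of_ne hne with h | h
  · left; exact mem_Dset.mpr ⟨hd, h⟩
  · right
    refine mem_Dset.mpr ⟨neg_ne_zero.mpr hd, ?_⟩
    rwa [neg_neg]

lemma Dset_neg_notMem {d : Fin m → ZMod 3} (hd : d ∈ Dset m) : -d ∉ Dset m := by
  classical
  intro h
  have h1 := (mem_Dset.mp hd).2
  have h2 := (mem_Dset.mp h).2
  rw [neg_neg] at h2
  exact absurd h1 (not_lt.mpr h2.le)

lemma line_ne1 {d : Fin m → ZMod 3} (hd : d ≠ 0) (a : Fin m → ZMod 3) :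
    a ≠ a + d := by
  intro h
  exact hd (by rwa [left_eq_add] at h)

lemma line_ne2 {d : Fin m → ZMod 3} (hd : d ≠ 0) (a : Fin m → ZMod 3) :
    a ≠ a + d + d := by
  intro h
  rw [add_assoc, left_eq_add, two_eq_neg, neg_eq_zero] at h
  exact hd h

lemma line_ne3 {d : Fin m → ZMod 3} (hd : d ≠ 0) (a : Fin m → ZMod 3) :
    a + d ≠ a + d + d := by
  intro h
  exact hd (by rwa [left_eq_add] at h)

lemma line_sum (d a : Fin m → ZMod 3) : a + (a + d) + (a + d + d) = 0 := by
  have h1 := three_nsmul a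
  have h2 := three_nsmul d
  calc a + (a + d) + (a + d + d) = (a + a + a) + (d + d + d) := by abel
  _ = 0 := by rw [h1, h2, add_zero]

lemma line_through {x y z : Fin m → ZMod 3} (hxy : x ≠ y) (hsum : x + y + z = 0) :
    y - x ≠ 0 ∧ y = x + (y - x) ∧ z = x + (y - x) + (y - x) := by
  refine ⟨fun h => hxy (by rwa [sub_eq_zero, eq_comm] at h), by abel, ?_⟩
  have h3 := three_nsmul y
  have key : x + (y - x) + (y - x) - z = (y + y + y) - (x + y + z) := by abel
  rw [h3, hsum, sub_zero] at key
  rw [sub_eq_zero] at key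
  exact key.symm

lemma lineSet_eq_triple {x y z : Fin m → ZMod 3} (hxy : x ≠ y) (hsum : x + y + z = 0) :
    lineSet (y - x) x = {x, y, z} := by
  obtain ⟨_, h2, h3⟩ := line_through hxy hsum
  unfold lineSet
  rw [← h3, ← h2]

lemma lineSet_card {d : Fin m → ZMod 3} (hd : d ≠ 0) (a : Fin m → ZMod 3) :
    (lineSet d a).card = 3 := by
  unfold lineSet
  rw [Finset.card_insert_of_notMem (by
      simp only [Finset.mem_insert, Finset.mem_singleton]
      push_neg
      exact ⟨line_ne1 hd a, line_ne2 hd a⟩),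
    Finset.card_insert_of_notMem (by
      simp only [Finset.mem_singleton]
      exact line_ne3 hd a),
    Finset.card_singleton]

lemma lineSet_inter {d a a' w : Fin m → ZMod 3} (h1 : w ∈ lineSet d a)
    (h2 : w ∈ lineSet d a') : lineSet d a = lineSet d a' := by
  rw [← lineSet_eq_of_mem h1, ← lineSet_eq_of_mem h2]

end STSAux


open STSAux in
/-- **Main theorem.**  Let `2 ≤ r ≤ k` and `T = 3^(k-r+1)`, and let `B` be a Steiner
triple system on `3^k` points with a `(k,r)`-decomposition into groups `G x` of size `T`
indexed by `x ∈ (ZMod 3)^(r-1)`.  If (a) the sub-STS on every group is resolvable, and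
(b) for every line `{x,y,z}` of `AG(r-1,3)` the Latin square of order `T` determined by
the transversal design of the blocks meeting all three of `G x`, `G y`, `G z` has an
orthogonal mate, then `B` is resolvable; in particular `B` can be partitioned into
`(3^k - 1)/2` parallel classes. -/
theorem sts_decomposition_resolvable {P : Type*} [Fintype P] [DecidableEq P]
    (k r : ℕ) (hr : 2 ≤ r) (hk : r ≤ k)
    (hP : Fintype.card P = 3 ^ k) (B : Finset (Finset P)) (hB : IsSTS B)
    (G : (Fin (r - 1) → ZMod 3) → Finset P)
    -- the groups partition the points and have size `T = 3^(k-r+1)`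
    (hGdisj : ∀ x y, x ≠ y → Disjoint (G x) (G y))
    (hGcover : Finset.univ.biUnion G = Finset.univ)
    (hGcard : ∀ x, (G x).card = 3 ^ (k - r + 1))
    -- (i) the blocks inside each group form a sub-STS on that group
    (hSub : ∀ x, IsSTSOn (G x) (B.filter fun b => b ⊆ G x))
    -- (ii) every other block has its three points in three distinct groups on a line
    (hLineBlocks : ∀ b ∈ B, (¬ ∃ x, b ⊆ G x) →
      ∃ x y z, x ≠ y ∧ x ≠ z ∧ y ≠ z ∧ x + y + z = 0 ∧
        (b ∩ G x).Nonempty ∧ (b ∩ G y).Nonempty ∧ (b ∩ G z).Nonempty)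
    -- (iii) the cross blocks of each line form a transversal design `TD[3;T]`
    (hTD : ∀ x y z, x ≠ y → x ≠ z → y ≠ z → x + y + z = 0 →
      ∀ u ∈ ({x, y, z} : Finset (Fin (r - 1) → ZMod 3)),
        ∀ v ∈ ({x, y, z} : Finset (Fin (r - 1) → ZMod 3)), u ≠ v →
          ∀ p ∈ G u, ∀ q ∈ G v,
            ∃! b, b ∈ B ∧ (b ∩ G x).Nonempty ∧ (b ∩ G y).Nonempty ∧
              (b ∩ G z).Nonempty ∧ p ∈ b ∧ q ∈ b)
    -- (a) the sub-STS on every group is resolvable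
    (hres : ∀ x, IsResolvableOn (G x) (B.filter fun b => b ⊆ G x))
    -- (b) the Latin square of the transversal design of every line has an orthogonal mate
    (hmate : ∀ x y z, x ≠ y → x ≠ z → y ≠ z → x + y + z = 0 →
      ∀ (φx : {p // p ∈ G x} ≃ Fin (3 ^ (k - r + 1)))
        (φy : {p // p ∈ G y} ≃ Fin (3 ^ (k - r + 1)))
        (φz : {p // p ∈ G z} ≃ Fin (3 ^ (k - r + 1)))
        (L : Fin (3 ^ (k - r + 1)) → Fin (3 ^ (k - r + 1)) → Fin (3 ^ (k - r + 1))),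
        (∀ i j m, L i j = m ↔
          ({(φx.symm i : P), (φy.symm j : P), (φz.symm m : P)} : Finset P) ∈ B) →
        ∃ M, IsLatinSquare M ∧ AreOrthogonal L M) :
    IsResolvable B ∧
      ∃ F : Finpartition B, F.parts.card = (3 ^ k - 1) / 2 ∧
        ∀ C ∈ F.parts, IsParallelClass C := by
  classical
  have hT0 : 0 < 3 ^ (k - r + 1) := pow_pos (by norm_num) _
  -- unique group of a point
  have hgr : ∀ (p : P) (x y : Fin (r - 1) → ZMod 3), p ∈ G x → p ∈ G y → x = y := by
    intro p x y hx hy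
    by_contra hne
    exact Finset.disjoint_left.mp (hGdisj x y hne) hx hy
  have hgex : ∀ p : P, ∃ x, p ∈ G x := by
    intro p
    have : p ∈ Finset.univ.biUnion G := by rw [hGcover]; exact Finset.mem_univ p
    obtain ⟨x, _, hx⟩ := Finset.mem_biUnion.mp this
    exact ⟨x, hx⟩
  -- inner resolutions
  choose F hF using hres
  have hpartsub : ∀ (x : Fin (r - 1) → ZMod 3) (C) (hC : C ∈ (F x).parts),
      ∀ b ∈ C, b ∈ B ∧ b ⊆ G x := by
    intro x C hC b hb
    have := (F x).le hC hb
    rw [Finset.mem_filter] at this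
    exact this
  set NI := (3 ^ (k - r + 1) - 1) / 2 with hNI
  have hFcard : ∀ x, (F x).parts.card = NI := by
    intro x
    have h2 := res_count (hSub x) (by rw [hGcard x]; exact hT0) (F x) (hF x)
    rw [hGcard x] at h2
    omega
  have ex : ∀ x : Fin (r - 1) → ZMod 3, {C // C ∈ (F x).parts} ≃ Fin NI := fun x =>
    (F x).parts.equivFinOfCardEq (hFcard x)
  set part : (Fin (r - 1) → ZMod 3) → Fin NI → Finset (Finset P) := fun x t =>
    ((ex x).symm t).1 with hpartdef
  have hpartmem : ∀ x t, part x t ∈ (F x).parts := fun x t => ((ex x).symm t).2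
  set InnerC : Fin NI → Finset (Finset P) := fun t =>
    Finset.univ.biUnion (fun x => part x t) with hInnerC
  have hInnerCmem : ∀ t b, b ∈ InnerC t ↔ ∃ x, b ∈ part x t := by
    intro t b
    simp [hInnerC, Finset.mem_biUnion]
  -- per-line resolutions
  have hline : ∀ d a : Fin (r - 1) → ZMod 3, d ≠ 0 →
      ∃ κ : Fin (3 ^ (k - r + 1)) → Finset (Finset P),
      (∀ j, IsParallelClassOn (G a ∪ G (a + d) ∪ G (a + d + d)) (κ j)) ∧
      (∀ j, ∀ b ∈ κ j, b ∈ B ∧ (b ∩ G a).Nonempty ∧ (b ∩ G (a + d)).Nonempty ∧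
        (b ∩ G (a + d + d)).Nonempty) ∧
      (∀ j j', j ≠ j' → Disjoint (κ j) (κ j')) ∧
      (∀ b ∈ B, (b ∩ G a).Nonempty → (b ∩ G (a + d)).Nonempty →
        (b ∩ G (a + d + d)).Nonempty → ∃ j, b ∈ κ j) := by
    intro d a hd
    have hne1 := line_ne1 hd a
    have hne2 := line_ne2 hd a
    have hne3 := line_ne3 hd a
    have hsum := line_sum d a
    apply line_res (hGdisj _ _ hne1) (hGdisj _ _ hne2) (hGdisj _ _ hne3)
      (hGcard a) (hGcard (a + d)) (hGcard (a + d + d)) hB.1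
    · intro p hp q hq
      exact hTD a (a + d) (a + d + d) hne1 hne2 hne3 hsum a (by simp) (a + d) (by simp)
        hne1 p hp q hq
    · intro φx φy φz L hLiff
      exact hmate a (a + d) (a + d + d) hne1 hne2 hne3 hsum φx φy φz L hLiff
  choose κ hκ using hline
  -- base points of lines
  set baseFS : (Fin (r - 1) → ZMod 3) → Finset (Fin (r - 1) → ZMod 3) := fun d =>
    Finset.univ.filter (fun a => base d a = a) with hbaseFS
  have hbase_mem_FS : ∀ d v : Fin (r - 1) → ZMod 3, base d v ∈ baseFS d := by
    intro d v
    rw [hbaseFS]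
    exact Finset.mem_filter.mpr ⟨Finset.mem_univ _, base_idem d v⟩
  have hbase_fix : ∀ d a : Fin (r - 1) → ZMod 3, a ∈ baseFS d → base d a = a := by
    intro d a ha
    rw [hbaseFS] at ha
    exact (Finset.mem_filter.mp ha).2
  set CrossC : (Fin (r - 1) → ZMod 3) → Fin (3 ^ (k - r + 1)) → Finset (Finset P) := fun d j =>
    if hd : d ≠ 0 then (baseFS d).biUnion (fun a => κ d a hd j) else ∅ with hCrossC
  have hCrossCmem : ∀ (d : Fin (r - 1) → ZMod 3) (hd : d ≠ 0) (j : Fin (3 ^ (k - r + 1))) (b : Finset P),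
      b ∈ CrossC d j ↔ ∃ a ∈ baseFS d, b ∈ κ d a hd j := by
    intro d hd j b
    rw [hCrossC]
    simp only [dif_pos hd, Finset.mem_biUnion]
  -- blocks of a line class lie in the three groups
  have hκsub : ∀ (d a : Fin (r - 1) → ZMod 3) (hd : d ≠ 0) (j : Fin (3 ^ (k - r + 1))) (b : Finset P),
      b ∈ κ d a hd j → b ⊆ G a ∪ G (a + d) ∪ G (a + d + d) := by
    intro d a hd j b hb
    have h2 := ((hκ d a hd).1 j).2
    intro u hu
    rw [← h2]
    exact Finset.mem_biUnion.mpr ⟨b, hb, hu⟩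
  -- every block of a line class determines its line
  have hκline : ∀ (d a : Fin (r - 1) → ZMod 3) (hd : d ≠ 0) (j : Fin (3 ^ (k - r + 1))) (b : Finset P),
      b ∈ κ d a hd j → ∀ w, (b ∩ G w).Nonempty → w ∈ lineSet d a := by
    intro d a hd j b hb w hw
    obtain ⟨p, hp⟩ := hw
    rw [Finset.mem_inter] at hp
    have hpu := hκsub d a hd j b hb hp.1
    rcases Finset.mem_union.mp hpu with h1 | h1
    · rcases Finset.mem_union.mp h1 with h2 | h2
      · rw [hgr p w a hp.2 h2]; simp [lineSet]
      · rw [hgr p w (a + d) hp.2 h2]; simp [lineSet]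
    · rw [hgr p w (a + d + d) hp.2 h1]; simp [lineSet]
  -- inner classes are parallel classes
  have hInnerPC : ∀ t, IsParallelClass (InnerC t) := by
    intro t
    constructor
    · intro b hb b' hb' hne
      obtain ⟨x, hbx⟩ := (hInnerCmem t b).mp hb
      obtain ⟨y, hby⟩ := (hInnerCmem t b').mp hb'
      by_cases hxy : x = y
      · subst hxy
        exact (hF x _ (hpartmem x t)).1 b hbx b' hby hne
      · exact Finset.disjoint_of_subset_left (hpartsub x _ (hpartmem x t) b hbx).2
          (Finset.disjoint_of_subset_right (hpartsub y _ (hpartmem y t) b' hby).2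
            (hGdisj x y hxy))
    · apply Finset.eq_univ_of_forall
      intro p
      obtain ⟨x, hx⟩ := hgex p
      have hcov := (hF x _ (hpartmem x t)).2
      have : p ∈ (part x t).biUnion id := by rw [hcov]; exact hx
      obtain ⟨b, hb, hpb⟩ := Finset.mem_biUnion.mp this
      exact Finset.mem_biUnion.mpr ⟨b, (hInnerCmem t b).mpr ⟨x, hb⟩, hpb⟩
  -- cross classes are parallel classes
  have hCrossPC : ∀ (d : Fin (r - 1) → ZMod 3) (hd : d ≠ 0) (j : Fin (3 ^ (k - r + 1))),
      IsParallelClass (CrossC d j) := by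
    intro d hd j
    constructor
    · intro b hb b' hb' hne
      obtain ⟨a, ha, hba⟩ := (hCrossCmem d hd j b).mp hb
      obtain ⟨a', ha', hba'⟩ := (hCrossCmem d hd j b').mp hb'
      by_cases haa : a = a'
      · subst haa
        exact ((hκ d a hd).1 j).1 b hba b' hba' hne
      · rw [Finset.disjoint_left]
        intro u hu hu'
        have h1 := hκsub d a hd j b hba hu
        have h2 := hκsub d a' hd j b' hba' hu'
        have hw1 : ∃ w ∈ lineSet d a, u ∈ G w := by
          rcases Finset.mem_union.mp h1 with h3 | h3
          · rcases Finset.mem_union.mp h3 with h4 | h4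
            · exact ⟨a, by simp [lineSet], h4⟩
            · exact ⟨a + d, by simp [lineSet], h4⟩
          · exact ⟨a + d + d, by simp [lineSet], h3⟩
        have hw2 : ∃ w ∈ lineSet d a', u ∈ G w := by
          rcases Finset.mem_union.mp h2 with h3 | h3
          · rcases Finset.mem_union.mp h3 with h4 | h4
            · exact ⟨a', by simp [lineSet], h4⟩
            · exact ⟨a' + d, by simp [lineSet], h4⟩
          · exact ⟨a' + d + d, by simp [lineSet], h3⟩
        obtain ⟨w1, hw1l, hw1g⟩ := hw1
        obtain ⟨w2, hw2l, hw2g⟩ := hw2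
        have : w1 = w2 := hgr u w1 w2 hw1g hw2g
        subst this
        have hls : lineSet d a = lineSet d a' := lineSet_inter hw1l hw2l
        exact haa ((hbase_fix d a ha) ▸ (hbase_fix d a' ha') ▸ base_congr hls)
    · apply Finset.eq_univ_of_forall
      intro p
      obtain ⟨v, hv⟩ := hgex p
      set a := base d v with hadef
      have hvl : v ∈ lineSet d a := by
        rw [hadef, lineSet_eq_of_mem (base_mem d v)]
        exact mem_lineSet_self d v
      have hpin : p ∈ G a ∪ G (a + d) ∪ G (a + d + d) := by
        simp only [lineSet, Finset.mem_insert, Finset.mem_singleton] at hvl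
        rcases hvl with he | he | he
        · exact Finset.mem_union.mpr (Or.inl (Finset.mem_union.mpr (Or.inl (he ▸ hv))))
        · exact Finset.mem_union.mpr (Or.inl (Finset.mem_union.mpr (Or.inr (he ▸ hv))))
        · exact Finset.mem_union.mpr (Or.inr (he ▸ hv))
      have hcov := ((hκ d a hd).1 j).2
      rw [← hcov] at hpin
      obtain ⟨b, hb, hpb⟩ := Finset.mem_biUnion.mp hpin
      exact Finset.mem_biUnion.mpr
        ⟨b, (hCrossCmem d hd j b).mpr ⟨a, hbase_mem_FS d v, hb⟩, hpb⟩
    -- nonemptiness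
  have hPuniv : (Finset.univ : Finset P).Nonempty := by
    rw [← Finset.card_pos, Finset.card_univ, hP]
    exact pow_pos (by norm_num) k
  have hInnerNE : ∀ t, (InnerC t).Nonempty := by
    intro t
    obtain ⟨b, hb⟩ := (F 0).nonempty_of_mem_parts (hpartmem 0 t)
    exact ⟨b, (hInnerCmem t b).mpr ⟨0, hb⟩⟩
  have hCrossNE : ∀ (d : Fin (r - 1) → ZMod 3) (hd : d ≠ 0) (j : Fin (3 ^ (k - r + 1))),
      (CrossC d j).Nonempty := by
    intro d hd j
    obtain ⟨p, _⟩ := hPuniv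
    have hcov := (hCrossPC d hd j).2
    have : p ∈ (CrossC d j).biUnion id := by rw [hcov]; exact Finset.mem_univ p
    obtain ⟨b, hb, _⟩ := Finset.mem_biUnion.mp this
    exact ⟨b, hb⟩
  -- membership in B
  have hInnerB : ∀ t b, b ∈ InnerC t → b ∈ B := by
    intro t b hb
    obtain ⟨x, hbx⟩ := (hInnerCmem t b).mp hb
    exact (hpartsub x _ (hpartmem x t) b hbx).1
  have hCrossB : ∀ (d : Fin (r - 1) → ZMod 3) (hd : d ≠ 0) (j) (b), b ∈ CrossC d j → b ∈ B := by
    intro d hd j b hb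
    obtain ⟨a, _, hba⟩ := (hCrossCmem d hd j b).mp hb
    exact ((hκ d a hd).2.1 j b hba).1
  -- inner and cross classes share no block
  have hIC_conflict : ∀ (t : Fin NI) (d : Fin (r - 1) → ZMod 3) (hd : d ≠ 0) (j) (b : Finset P),
      b ∈ InnerC t → b ∈ CrossC d j → False := by
    intro t d hd j b hbI hbC
    obtain ⟨x, hbx⟩ := (hInnerCmem t b).mp hbI
    have hsubx := (hpartsub x _ (hpartmem x t) b hbx).2
    obtain ⟨a, _, hba⟩ := (hCrossCmem d hd j b).mp hbC
    obtain ⟨_, ⟨p, hp⟩, ⟨q, hq⟩, _⟩ := (hκ d a hd).2.1 j b hba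
    rw [Finset.mem_inter] at hp hq
    have h1 : x = a := hgr p x a (hsubx hp.1) hp.2
    have h2 : x = a + d := hgr q x (a + d) (hsubx hq.1) hq.2
    exact line_ne1 hd a (h1 ▸ h2)
  -- two cross classes sharing a block coincide
  have hCC : ∀ (d d' : Fin (r - 1) → ZMod 3), d ∈ Dset (r - 1) → d' ∈ Dset (r - 1) →
      ∀ (j j') (b : Finset P), b ∈ CrossC d j → b ∈ CrossC d' j' → d = d' ∧ j = j' := by
    intro d d' hDd hDd' j j' b hbC hbC'
    have hd := Dset_ne_zero hDd
    have hd' := Dset_ne_zero hDd'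
    obtain ⟨a, ha, hba⟩ := (hCrossCmem d hd j b).mp hbC
    obtain ⟨a', ha', hba'⟩ := (hCrossCmem d' hd' j' b).mp hbC'
    obtain ⟨_, hm1, hm2, hm3⟩ := (hκ d' a' hd').2.1 j' b hba'
    have hma : a' ∈ lineSet d a := hκline d a hd j b hba a' hm1
    have hmb : a' + d' ∈ lineSet d a := hκline d a hd j b hba (a' + d') hm2
    have hmc : a' + d' + d' ∈ lineSet d a := hκline d a hd j b hba (a' + d' + d') hm3
    have hsub : lineSet d' a' ⊆ lineSet d a := by
      intro w hw
      simp only [lineSet, Finset.mem_insert, Finset.mem_singleton] at hw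
      rcases hw with rfl | rfl | rfl
      exacts [hma, hmb, hmc]
    have heq : lineSet d' a' = lineSet d a :=
      Finset.eq_of_subset_of_card_le hsub (by rw [lineSet_card hd a, lineSet_card hd' a'])
    have hdir := lineSet_direction hd' heq.symm
    have hdd : d' = d := by
      rcases hdir with h | h
      · exact h
      · exfalso
        apply Dset_neg_notMem hDd'
        rw [h, neg_neg]
        exact hDd
    subst hdd
    have haa : a' = a := by
      have hb1 := hbase_fix d' a ha
      have hb2 := hbase_fix d' a' ha'
      rw [← hb1, ← hb2]
      exact base_congr heq
    subst haa
    refine ⟨rfl, ?_⟩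
    by_contra hne
    exact Finset.disjoint_left.mp ((hκ d' a' hd').2.2.1 j j' hne) hba hba'
  -- assemble the partition
  set partsF : Finset (Finset (Finset P)) :=
    (Finset.univ.image InnerC) ∪
      ((Dset (r - 1) ×ˢ (Finset.univ : Finset (Fin (3 ^ (k - r + 1))))).image
        (fun dj => CrossC dj.1 dj.2)) with hpartsF
  have hmem_partsF : ∀ C, C ∈ partsF ↔
      (∃ t, InnerC t = C) ∨ (∃ d ∈ Dset (r - 1), ∃ j, CrossC d j = C) := by
    intro C
    rw [hpartsF, Finset.mem_union]
    constructor
    · rintro (h | h)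
      · obtain ⟨t, _, ht⟩ := Finset.mem_image.mp h
        exact Or.inl ⟨t, ht⟩
      · obtain ⟨⟨d, j⟩, hdj, hC⟩ := Finset.mem_image.mp h
        rw [Finset.mem_product] at hdj
        exact Or.inr ⟨d, hdj.1, j, hC⟩
    · rintro (⟨t, ht⟩ | ⟨d, hd, j, hC⟩)
      · exact Or.inl (Finset.mem_image.mpr ⟨t, Finset.mem_univ t, ht⟩)
      · exact Or.inr (Finset.mem_image.mpr
          ⟨(d, j), Finset.mem_product.mpr ⟨hd, Finset.mem_univ j⟩, hC⟩)
  have hPCparts : ∀ C ∈ partsF, IsParallelClass C := by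
    intro C hC
    rcases (hmem_partsF C).mp hC with ⟨t, ht⟩ | ⟨d, hd, j, hC'⟩
    · exact ht ▸ hInnerPC t
    · exact hC' ▸ hCrossPC d (Dset_ne_zero hd) j
  have hdisjparts : (↑partsF : Set (Finset (Finset P))).PairwiseDisjoint id := by
    intro C hC C' hC' hne
    rw [Finset.mem_coe] at hC hC'
    have hdis : ∀ b : Finset P, b ∈ C → b ∈ C' → False := by
      intro b hb hb'
      rcases (hmem_partsF C).mp hC with ⟨t, ht⟩ | ⟨d, hd, j, hCr⟩ <;>
        rcases (hmem_partsF C').mp hC' with ⟨t', ht'⟩ | ⟨d', hd', j', hCr'⟩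
      · -- inner / inner
        subst ht; subst ht'
        obtain ⟨x, hbx⟩ := (hInnerCmem t b).mp hb
        obtain ⟨y, hby⟩ := (hInnerCmem t' b).mp hb'
        have hxy : x = y := by
          have hbB := (hpartsub x _ (hpartmem x t) b hbx).1
          have hbne : b.Nonempty := by
            rw [← Finset.card_pos, hB.1 b hbB]; norm_num
          obtain ⟨p, hp⟩ := hbne
          exact hgr p x y ((hpartsub x _ (hpartmem x t) b hbx).2 hp)
            ((hpartsub y _ (hpartmem y t') b hby).2 hp)
        subst hxy
        by_cases hpe : part x t = part x t'
        · have : (ex x).symm t = (ex x).symm t' := Subtype.ext hpe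
          have : t = t' := (ex x).symm.injective this
          exact hne (by rw [this])
        · exact Finset.disjoint_left.mp
            ((F x).disjoint (hpartmem x t) (hpartmem x t') hpe) hbx hby
      · subst ht; subst hCr'
        exact hIC_conflict t d' (Dset_ne_zero hd') j' b hb hb'
      · subst ht'; subst hCr
        exact hIC_conflict t' d (Dset_ne_zero hd) j b hb' hb
      · subst hCr; subst hCr'
        obtain ⟨hdd, hjj⟩ := hCC d d' hd hd' j j' b hb hb'
        exact hne (by rw [hdd, hjj])
    rw [Function.onFun, id, id, Finset.disjoint_left]
    intro b hb hb'
    exact hdis b hb hb'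
  have hnb : ⊥ ∉ partsF := by
    intro h
    rcases (hmem_partsF ⊥).mp h with ⟨t, ht⟩ | ⟨d, hd, j, hC⟩
    · exact Finset.not_nonempty_empty (ht ▸ hInnerNE t)
    · exact Finset.not_nonempty_empty (hC ▸ hCrossNE d (Dset_ne_zero hd) j)
  have hsup : partsF.sup id = B := by
    apply le_antisymm
    · apply Finset.sup_le
      intro C hC
      rcases (hmem_partsF C).mp hC with ⟨t, ht⟩ | ⟨d, hd, j, hC'⟩
      · intro b hb
        exact hInnerB t b (ht ▸ hb)
      · intro b hb
        exact hCrossB d (Dset_ne_zero hd) j b (hC' ▸ hb)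
    · intro b hb
      rw [Finset.mem_sup]
      by_cases hx : ∃ x, b ⊆ G x
      · obtain ⟨x, hxs⟩ := hx
        have hbf : b ∈ B.filter (fun b => b ⊆ G x) := Finset.mem_filter.mpr ⟨hb, hxs⟩
        obtain ⟨C, hC, hbC⟩ := (F x).exists_mem hbf
        set t := ex x ⟨C, hC⟩ with htdef
        have hpt : part x t = C := by
          rw [hpartdef]
          simp only [htdef, Equiv.symm_apply_apply]
        refine ⟨InnerC t, (hmem_partsF _).mpr (Or.inl ⟨t, rfl⟩), ?_⟩
        exact (hInnerCmem t b).mpr ⟨x, hpt ▸ hbC⟩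
      · obtain ⟨x, y, z, hxy, hxz, hyz, hsum, hbx, hby, hbz⟩ := hLineBlocks b hb hx
        obtain ⟨hd0, hy0, hz0⟩ := line_through hxy hsum
        obtain ⟨d, hDm, hls⟩ : ∃ d, d ∈ Dset (r - 1) ∧ lineSet d x = lineSet (y - x) x := by
          rcases Dset_total hd0 with h | h
          · exact ⟨y - x, h, rfl⟩
          · exact ⟨-(y - x), h, lineSet_neg (y - x) x⟩
        have hd := Dset_ne_zero hDm
        set a := base d x with hadef
        have ha : a ∈ baseFS d := hbase_mem_FS d x
        have hla : lineSet d a = lineSet d x := lineSet_eq_of_mem (base_mem d x)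
        have hmeets : ∀ w, w ∈ lineSet d a → (b ∩ G w).Nonempty := by
          intro w hw
          rw [hla, hls] at hw
          simp only [lineSet, Finset.mem_insert, Finset.mem_singleton] at hw
          rcases hw with rfl | hw | hw
          · exact hbx
          · rw [hw, ← hy0]; exact hby
          · rw [hw, ← hz0]; exact hbz
        obtain ⟨j, hj⟩ := (hκ d a hd).2.2.2 b hb
          (hmeets a (by simp [lineSet]))
          (hmeets (a + d) (by simp [lineSet]))
          (hmeets (a + d + d) (by simp [lineSet]))
        exact ⟨CrossC d j, (hmem_partsF _).mpr (Or.inr ⟨d, hDm, j, rfl⟩),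
          (hCrossCmem d hd j b).mpr ⟨a, ha, hj⟩⟩
  -- the final partition
  set Fp : Finpartition B :=
    ⟨partsF, Finset.supIndep_iff_pairwiseDisjoint.mpr hdisjparts, hsup, hnb⟩ with hFp
  have hFpparts : ∀ C ∈ Fp.parts, IsParallelClass C := hPCparts
  have hSTSuniv : IsSTSOn (Finset.univ : Finset P) B :=
    ⟨fun b hb => ⟨Finset.subset_univ b, hB.1 b hb⟩, fun p _ q _ h => hB.2 p q h⟩
  have hcu : (Finset.univ : Finset P).card = 3 ^ k := by rw [Finset.card_univ, hP]
  have hcount := res_count hSTSuniv (by rw [hcu]; exact pow_pos (by norm_num) k) Fp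
    (fun C hC => hFpparts C hC)
  rw [hcu] at hcount
  have h3k : 0 < 3 ^ k := pow_pos (by norm_num) k
  exact ⟨⟨Fp, hFpparts⟩, Fp, by omega, hFpparts⟩
end

section
/- Let S = (P, B) be a Steiner triple system on 27 points admitting a (3,2)-decomposition, i.e. a partition of P into three groups G_0, G_1, G_2 of size 9 such that the blocks contained in each G_i form a Steiner triple system on G_i, every other block meets all three groups, and every pair of points from two different groups lies in exactly one block meeting all three groups (so these cross blocks form a transversal design TD[3;9] given by a Latin square of order 9). If that Latin square of order 9 has an orthogonal mate, then S is resolvable; its block set is partitioned into 13 parallel classes. -/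
namespace STS9

variable {P : Type*} [DecidableEq P] {s : Finset P} {Bs : Finset (Finset P)}

lemma block_sub (h : IsSTSOn s Bs) {b : Finset P} (hb : b ∈ Bs) : b ⊆ s := (h.1 b hb).1

lemma block_card (h : IsSTSOn s Bs) {b : Finset P} (hb : b ∈ Bs) : b.card = 3 := (h.1 b hb).2

lemma block_unique (h : IsSTSOn s Bs) {b b' : Finset P} {p q : P} (hb : b ∈ Bs) (hb' : b' ∈ Bs)
    (hpq : p ≠ q) (hp : p ∈ b) (hq : q ∈ b) (hp' : p ∈ b') (hq' : q ∈ b') : b = b' := by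
  obtain ⟨c, -, hu⟩ := h.2 p (block_sub h hb hp) q (block_sub h hb hq) hpq
  rw [hu b ⟨hb, hp, hq⟩, hu b' ⟨hb', hp', hq'⟩]

lemma exists_block (h : IsSTSOn s Bs) {p q : P} (hp : p ∈ s) (hq : q ∈ s) (hpq : p ≠ q) :
    ∃ b ∈ Bs, p ∈ b ∧ q ∈ b := by
  obtain ⟨c, ⟨hc, hpc, hqc⟩, -⟩ := h.2 p hp q hq hpq
  exact ⟨c, hc, hpc, hqc⟩

lemma third_point {b : Finset P} (hb : b.card = 3) {x p : P} (hx : x ∈ b) (hp : p ∈ b)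
    (hxp : x ≠ p) : ∃ u, u ≠ x ∧ u ≠ p ∧ b = {x, p, u} := by
  have hsub : ({x, p} : Finset P) ⊆ b := by
    intro t ht; simp only [Finset.mem_insert, Finset.mem_singleton] at ht
    rcases ht with rfl | rfl <;> assumption
  have hc2 : ({x, p} : Finset P).card = 2 := Finset.card_pair hxp
  have h1 : (b \ {x, p}).card = 1 := by
    rw [Finset.card_sdiff_of_subset hsub, hb, hc2]
  obtain ⟨u, hu⟩ := Finset.card_eq_one.mp h1
  have hum : u ∈ b \ ({x, p} : Finset P) := hu ▸ Finset.mem_singleton_self u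
  rw [Finset.mem_sdiff, Finset.mem_insert, Finset.mem_singleton] at hum
  push_neg at hum
  refine ⟨u, hum.2.1, hum.2.2, ?_⟩
  have := Finset.union_sdiff_of_subset hsub
  rw [hu] at this
  rw [← this]
  ext t; simp [Finset.mem_insert, Finset.mem_union]


lemma point_block (h : IsSTSOn s Bs) (hs : s.card = 9) {b : Finset P} {x : P} (hb : b ∈ Bs)
    (hx : x ∈ s) (hxb : x ∉ b) : ∃! d, d ∈ Bs ∧ x ∈ d ∧ Disjoint d b := by
  obtain ⟨p, q, r, hpq, hpr, hqr, rfl⟩ := Finset.card_eq_three.mp (block_card h hb)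
  have hpb : p ∈ ({p, q, r} : Finset P) := by simp
  have hqb : q ∈ ({p, q, r} : Finset P) := by simp
  have hrb : r ∈ ({p, q, r} : Finset P) := by simp
  have hps : p ∈ s := block_sub h hb hpb
  have hqs : q ∈ s := block_sub h hb hqb
  have hrs : r ∈ s := block_sub h hb hrb
  have hxp : x ≠ p := fun e => hxb (e ▸ hpb)
  have hxq : x ≠ q := fun e => hxb (e ▸ hqb)
  have hxr : x ≠ r := fun e => hxb (e ▸ hrb)
  obtain ⟨cp, hcp, hxcp, hpcp⟩ := exists_block h hx hps hxp
  obtain ⟨cq, hcq, hxcq, hqcq⟩ := exists_block h hx hqs hxq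
  obtain ⟨cr, hcr, hxcr, hrcr⟩ := exists_block h hx hrs hxr
  obtain ⟨u, hux, hup, hcpe⟩ := third_point (block_card h hcp) hxcp hpcp hxp
  obtain ⟨v, hvx, hvq, hcqe⟩ := third_point (block_card h hcq) hxcq hqcq hxq
  obtain ⟨w, hwx, hwr, hcre⟩ := third_point (block_card h hcr) hxcr hrcr hxr
  -- second points are outside b
  have keyP : ∀ t, t ∈ cp → t ∈ ({p, q, r} : Finset P) → t = p := by
    intro t ht htb
    by_contra hne
    have : cp = {p, q, r} := block_unique h hcp hb (Ne.symm hne) hpcp ht hpb htb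
    exact hxb (this ▸ hxcp)
  have keyQ : ∀ t, t ∈ cq → t ∈ ({p, q, r} : Finset P) → t = q := by
    intro t ht htb
    by_contra hne
    have : cq = {p, q, r} := block_unique h hcq hb (Ne.symm hne) hqcq ht hqb htb
    exact hxb (this ▸ hxcq)
  have keyR : ∀ t, t ∈ cr → t ∈ ({p, q, r} : Finset P) → t = r := by
    intro t ht htb
    by_contra hne
    have : cr = {p, q, r} := block_unique h hcr hb (Ne.symm hne) hrcr ht hrb htb
    exact hxb (this ▸ hxcr)
  have hucp : u ∈ cp := by rw [hcpe]; simp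
  have hvcq : v ∈ cq := by rw [hcqe]; simp
  have hwcr : w ∈ cr := by rw [hcre]; simp
  have hub : u ∉ ({p, q, r} : Finset P) := fun hm => hup (keyP u hucp hm)
  have hvb : v ∉ ({p, q, r} : Finset P) := fun hm => hvq (keyQ v hvcq hm)
  have hwb : w ∉ ({p, q, r} : Finset P) := fun hm => hwr (keyR w hwcr hm)
  -- u, v, w pairwise distinct
  have huv : u ≠ v := by
    rintro rfl
    have : cp = cq := block_unique h hcp hcq (Ne.symm hux) hxcp hucp hxcq hvcq
    have hpcq : p ∈ cq := this ▸ hpcp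
    exact hpq (keyQ p hpcq hpb)
  have huw : u ≠ w := by
    rintro rfl
    have : cp = cr := block_unique h hcp hcr (Ne.symm hux) hxcp hucp hxcr hwcr
    have hpcr : p ∈ cr := this ▸ hpcp
    exact hpr (keyR p hpcr hpb)
  have hvw : v ≠ w := by
    rintro rfl
    have : cq = cr := block_unique h hcq hcr (Ne.symm hvx) hxcq hvcq hxcr hwcr
    have hqcr : q ∈ cr := this ▸ hqcq
    exact hqr (keyR q hqcr hqb)
  have hus : u ∈ s := block_sub h hcp hucp
  have hvs : v ∈ s := block_sub h hcq hvcq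
  have hws : w ∈ s := block_sub h hcr hwcr
  -- the big 7-element set
  set E : Finset P := {x, p, q, r, u, v, w} with hE
  have hupq : u ≠ p ∧ u ≠ q ∧ u ≠ r := by
    simp only [Finset.mem_insert, Finset.mem_singleton] at hub; tauto
  have hvpq : v ≠ p ∧ v ≠ q ∧ v ≠ r := by
    simp only [Finset.mem_insert, Finset.mem_singleton] at hvb; tauto
  have hwpq : w ≠ p ∧ w ≠ q ∧ w ≠ r := by
    simp only [Finset.mem_insert, Finset.mem_singleton] at hwb; tauto
  have hEcard : E.card = 7 := by
    rw [hE]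
    rw [Finset.card_insert_of_notMem (by simp [hxp, hxq, hxr, hux.symm, hvx.symm, hwx.symm]),
        Finset.card_insert_of_notMem (by simp [hpq, hpr, hupq.1.symm, hvpq.1.symm, hwpq.1.symm]),
        Finset.card_insert_of_notMem (by simp [hqr, hupq.2.1.symm, hvpq.2.1.symm, hwpq.2.1.symm]),
        Finset.card_insert_of_notMem (by simp [hupq.2.2.symm, hvpq.2.2.symm, hwpq.2.2.symm]),
        Finset.card_insert_of_notMem (by simp [huv, huw]),
        Finset.card_insert_of_notMem (by simp [hvw]),
        Finset.card_singleton]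
  have hEsub : E ⊆ s := by
    intro t ht
    simp only [hE, Finset.mem_insert, Finset.mem_singleton] at ht
    rcases ht with rfl|rfl|rfl|rfl|rfl|rfl|rfl <;> assumption
  set T : Finset P := s \ E with hT
  have hTcard : T.card = 2 := by rw [hT, Finset.card_sdiff_of_subset hEsub, hs, hEcard]
  -- key claim: any block through x disjoint from b has its other points in T
  have claim : ∀ d ∈ Bs, x ∈ d → Disjoint d ({p, q, r} : Finset P) →
      ∀ t ∈ d, t ≠ x → t ∈ T := by
    intro d hd hxd hdisj t htd htx
    have hts : t ∈ s := block_sub h hd htd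
    have htb : t ∉ ({p, q, r} : Finset P) := Finset.disjoint_left.mp hdisj htd
    have htu : t ≠ u := by
      rintro rfl
      have : d = cp := block_unique h hd hcp htx htd hxd hucp hxcp
      exact Finset.disjoint_left.mp hdisj (this ▸ hpcp) hpb
    have htv : t ≠ v := by
      rintro rfl
      have : d = cq := block_unique h hd hcq htx htd hxd hvcq hxcq
      exact Finset.disjoint_left.mp hdisj (this ▸ hqcq) hqb
    have htw : t ≠ w := by
      rintro rfl
      have : d = cr := block_unique h hd hcr htx htd hxd hwcr hxcr
      exact Finset.disjoint_left.mp hdisj (this ▸ hrcr) hrb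
    rw [hT, Finset.mem_sdiff]
    refine ⟨hts, ?_⟩
    simp only [hE, Finset.mem_insert, Finset.mem_singleton] at htb ⊢
    push_neg at htb ⊢
    exact ⟨htx, htb.1, htb.2.1, htb.2.2, htu, htv, htw⟩
  have hxT : x ∉ T := by
    rw [hT, Finset.mem_sdiff]; rintro ⟨-, hxE⟩; exact hxE (by simp [hE])
  have claim2 : ∀ d ∈ Bs, x ∈ d → Disjoint d ({p, q, r} : Finset P) → d = insert x T := by
    intro d hd hxd hdisj
    have hsub : d ⊆ insert x T := by
      intro t htd
      rcases eq_or_ne t x with rfl | htx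
      · exact Finset.mem_insert_self _ _
      · exact Finset.mem_insert_of_mem (claim d hd hxd hdisj t htd htx)
    refine Finset.eq_of_subset_of_card_le hsub ?_
    rw [Finset.card_insert_of_notMem hxT, hTcard, block_card h hd]
  -- existence
  obtain ⟨y, z, hyz, hTe⟩ := Finset.card_eq_two.mp hTcard
  have hyT : y ∈ T := by rw [hTe]; simp
  have hys : y ∈ s := (Finset.mem_sdiff.mp hyT).1
  have hxy : x ≠ y := fun e => hxT (e ▸ hyT)
  obtain ⟨d, hd, hxd, hyd⟩ := exists_block h hx hys hxy
  have hddisj : Disjoint d ({p, q, r} : Finset P) := by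
    rw [Finset.disjoint_left]
    intro t htd htb
    have hd' : d = cp ∨ d = cq ∨ d = cr := by
      simp only [Finset.mem_insert, Finset.mem_singleton] at htb
      rcases htb with rfl | rfl | rfl
      · exact Or.inl (block_unique h hd hcp hxp hxd htd hxcp hpcp)
      · exact Or.inr (Or.inl (block_unique h hd hcq hxq hxd htd hxcq hqcq))
      · exact Or.inr (Or.inr (block_unique h hd hcr hxr hxd htd hxcr hrcr))
    have hyE : y ∉ E := (Finset.mem_sdiff.mp hyT).2
    apply hyE
    have hyd' : y = x ∨ y = p ∨ y = q ∨ y = r ∨ y = u ∨ y = v ∨ y = w := by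
      rcases hd' with rfl | rfl | rfl
      · rw [hcpe] at hyd
        simp only [Finset.mem_insert, Finset.mem_singleton] at hyd
        rcases hyd with h1 | h1 | h1
        · exact Or.inl h1
        · exact Or.inr (Or.inl h1)
        · exact Or.inr (Or.inr (Or.inr (Or.inr (Or.inl h1))))
      · rw [hcqe] at hyd
        simp only [Finset.mem_insert, Finset.mem_singleton] at hyd
        rcases hyd with h1 | h1 | h1
        · exact Or.inl h1
        · exact Or.inr (Or.inr (Or.inl h1))
        · exact Or.inr (Or.inr (Or.inr (Or.inr (Or.inr (Or.inl h1)))))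
      · rw [hcre] at hyd
        simp only [Finset.mem_insert, Finset.mem_singleton] at hyd
        rcases hyd with h1 | h1 | h1
        · exact Or.inl h1
        · exact Or.inr (Or.inr (Or.inr (Or.inl h1)))
        · exact Or.inr (Or.inr (Or.inr (Or.inr (Or.inr (Or.inr h1)))))
    rw [hE]
    simp only [Finset.mem_insert, Finset.mem_singleton]
    exact hyd'
  refine ⟨d, ⟨hd, hxd, hddisj⟩, ?_⟩
  rintro d' ⟨hd', hxd', hdisj'⟩
  rw [claim2 d' hd' hxd' hdisj', claim2 d hd hxd hddisj]


/-- The parallel class of `b`: `b` together with all blocks disjoint from it. -/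
def classOf (Bs : Finset (Finset P)) (b : Finset P) : Finset (Finset P) :=
  insert b (Bs.filter fun e => Disjoint e b)

lemma mem_classOf_self (Bs : Finset (Finset P)) (b : Finset P) : b ∈ classOf Bs b :=
  Finset.mem_insert_self _ _

lemma mem_classOf {Bs : Finset (Finset P)} {b e : Finset P} :
    e ∈ classOf Bs b ↔ e = b ∨ (e ∈ Bs ∧ Disjoint e b) := by
  simp [classOf, Finset.mem_insert, Finset.mem_filter]

lemma classOf_subset {Bs : Finset (Finset P)} {b : Finset P} (hb : b ∈ Bs) :
    classOf Bs b ⊆ Bs := by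
  intro e he
  rcases mem_classOf.mp he with rfl | ⟨h1, -⟩ <;> [exact hb; exact h1]

lemma class_spec (h : IsSTSOn s Bs) (hs : s.card = 9) {b : Finset P} (hb : b ∈ Bs) :
    ∃ d1 d2, classOf Bs b = {b, d1, d2} ∧ d1 ∈ Bs ∧ d2 ∈ Bs ∧
      b ≠ d1 ∧ b ≠ d2 ∧ d1 ≠ d2 ∧
      Disjoint b d1 ∧ Disjoint b d2 ∧ Disjoint d1 d2 ∧ b ∪ d1 ∪ d2 = s := by
  have hbs := block_sub h hb
  have hbc := block_card h hb
  -- choose x1 outside b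
  have h1 : (s \ b).Nonempty := by
    rw [← Finset.card_pos, Finset.card_sdiff_of_subset hbs, hs, hbc]; norm_num
  obtain ⟨x1, hx1⟩ := h1
  rw [Finset.mem_sdiff] at hx1
  obtain ⟨d1, ⟨hd1, hx1d1, hdisj1⟩, huniq1⟩ := point_block h hs hb hx1.1 hx1.2
  have hd1s := block_sub h hd1
  have hd1c := block_card h hd1
  -- choose x2 outside b ∪ d1
  have h2 : (s \ (b ∪ d1)).Nonempty := by
    rw [← Finset.card_pos]
    have : (b ∪ d1).card ≤ 6 := by
      calc (b ∪ d1).card ≤ b.card + d1.card := Finset.card_union_le _ _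
      _ = 6 := by rw [hbc, hd1c]
    have hsub : b ∪ d1 ⊆ s := Finset.union_subset hbs hd1s
    rw [Finset.card_sdiff_of_subset hsub, hs]
    omega
  obtain ⟨x2, hx2⟩ := h2
  rw [Finset.mem_sdiff, Finset.mem_union] at hx2
  push_neg at hx2
  obtain ⟨d2, ⟨hd2, hx2d2, hdisj2⟩, huniq2⟩ := point_block h hs hb hx2.1 hx2.2.1
  have hd2s := block_sub h hd2
  have hd2c := block_card h hd2
  -- disjointness d1 d2
  have hd1d2 : d1 ≠ d2 := by
    rintro rfl; exact hx2.2.2 hx2d2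
  have hdisj12 : Disjoint d1 d2 := by
    rw [Finset.disjoint_left]
    intro t ht1 ht2
    have hts : t ∈ s := hd1s ht1
    have htb : t ∉ b := Finset.disjoint_left.mp hdisj1 ht1
    obtain ⟨d', -, huniq'⟩ := point_block h hs hb hts htb
    exact hd1d2 ((huniq' d1 ⟨hd1, ht1, hdisj1⟩).trans (huniq' d2 ⟨hd2, ht2, hdisj2⟩).symm)
  have hbd1 : b ≠ d1 := by rintro rfl; exact hx1.2 hx1d1
  have hbd2 : b ≠ d2 := by rintro rfl; exact hx2.2.1 hx2d2
  have hdisjb1 : Disjoint b d1 := hdisj1.symm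
  have hdisjb2 : Disjoint b d2 := hdisj2.symm
  -- union
  have hunion : b ∪ d1 ∪ d2 = s := by
    apply Finset.eq_of_subset_of_card_le
    · exact Finset.union_subset (Finset.union_subset hbs hd1s) hd2s
    · rw [Finset.card_union_of_disjoint (by rw [Finset.disjoint_union_left]; exact ⟨hdisjb2, hdisj12⟩),
        Finset.card_union_of_disjoint hdisjb1, hbc, hd1c, hd2c, hs]
  refine ⟨d1, d2, ?_, hd1, hd2, hbd1, hbd2, hd1d2, hdisjb1, hdisjb2, hdisj12, hunion⟩
  apply Finset.Subset.antisymm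
  · intro e he
    rcases mem_classOf.mp he with rfl | ⟨he1, he2⟩
    · simp
    · have hene : e.Nonempty := by
        rw [← Finset.card_pos, block_card h he1]; norm_num
      obtain ⟨t, ht⟩ := hene
      have hts : t ∈ s := block_sub h he1 ht
      have htb : t ∉ b := Finset.disjoint_left.mp he2 ht
      have htd : t ∈ d1 ∨ t ∈ d2 := by
        have : t ∈ b ∪ d1 ∪ d2 := hunion ▸ hts
        rw [Finset.mem_union, Finset.mem_union] at this
        rcases this with (htb' | h') | h'
        · exact absurd htb' htb
        · exact Or.inl h'
        · exact Or.inr h'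
      obtain ⟨d', -, huniq'⟩ := point_block h hs hb hts htb
      rcases htd with htd | htd
      · have : e = d1 := (huniq' e ⟨he1, ht, he2⟩).trans (huniq' d1 ⟨hd1, htd, hdisj1⟩).symm
        simp [this]
      · have : e = d2 := (huniq' e ⟨he1, ht, he2⟩).trans (huniq' d2 ⟨hd2, htd, hdisj2⟩).symm
        simp [this]
  · intro e he
    simp only [Finset.mem_insert, Finset.mem_singleton] at he
    rcases he with rfl | rfl | rfl
    · exact mem_classOf_self _ _
    · exact mem_classOf.mpr (Or.inr ⟨hd1, hdisj1⟩)
    · exact mem_classOf.mpr (Or.inr ⟨hd2, hdisj2⟩)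

lemma class_card (h : IsSTSOn s Bs) (hs : s.card = 9) {b : Finset P} (hb : b ∈ Bs) :
    (classOf Bs b).card = 3 := by
  obtain ⟨d1, d2, heq, -, -, h1, h2, h3, -⟩ := class_spec h hs hb
  rw [heq, Finset.card_insert_of_notMem (by simp [h1, h2]),
    Finset.card_insert_of_notMem (by simp [h3]), Finset.card_singleton]

lemma class_pairwise (h : IsSTSOn s Bs) (hs : s.card = 9) {b : Finset P} (hb : b ∈ Bs) :
    ∀ e ∈ classOf Bs b, ∀ e' ∈ classOf Bs b, e ≠ e' → Disjoint e e' := by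
  obtain ⟨d1, d2, heq, -, -, -, -, -, hD1, hD2, hD12, -⟩ := class_spec h hs hb
  rw [heq]
  intro e he e' he' hne
  simp only [Finset.mem_insert, Finset.mem_singleton] at he he'
  rcases he with rfl | rfl | rfl <;> rcases he' with rfl | rfl | rfl <;>
    first
      | exact absurd rfl hne
      | assumption
      | exact hD1.symm
      | exact hD2.symm
      | exact hD12.symm

lemma class_biUnion (h : IsSTSOn s Bs) (hs : s.card = 9) {b : Finset P} (hb : b ∈ Bs) :
    (classOf Bs b).biUnion id = s := by
  obtain ⟨d1, d2, heq, -, -, -, -, -, -, -, -, hu⟩ := class_spec h hs hb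
  rw [heq, ← hu]
  ext t
  simp only [Finset.mem_biUnion, Finset.mem_insert, Finset.mem_singleton, id_eq,
    Finset.mem_union]
  constructor
  · rintro ⟨i, (rfl | rfl | rfl), hi⟩ <;> [exact Or.inl (Or.inl hi); exact Or.inl (Or.inr hi); exact Or.inr hi]
  · rintro ((hi | hi) | hi) <;> [exact ⟨b, Or.inl rfl, hi⟩; exact ⟨d1, Or.inr (Or.inl rfl), hi⟩; exact ⟨d2, Or.inr (Or.inr rfl), hi⟩]

lemma class_eq_of_mem (h : IsSTSOn s Bs) (hs : s.card = 9) {b e : Finset P} (hb : b ∈ Bs)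
    (he : e ∈ classOf Bs b) : classOf Bs e = classOf Bs b := by
  obtain ⟨d1, d2, heq, hd1, hd2, h1, h2, h3, hD1, hD2, hD12, hu⟩ := class_spec h hs hb
  have hkey : ∀ f g : Finset P, f ∈ Bs → g ∈ Bs → classOf Bs b = {b, f, g} →
      Disjoint b f → Disjoint b g → Disjoint f g → classOf Bs f = classOf Bs b := by
    intro f g hf hg heq' hbf hbg hfg
    have hsub : classOf Bs b ⊆ classOf Bs f := by
      rw [heq']
      intro e' he'
      simp only [Finset.mem_insert, Finset.mem_singleton] at he'
      rcases he' with rfl | rfl | rfl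
      · exact mem_classOf.mpr (Or.inr ⟨hb, hbf⟩)
      · exact mem_classOf_self _ _
      · exact mem_classOf.mpr (Or.inr ⟨hg, hfg.symm⟩)
    exact (Finset.eq_of_subset_of_card_le hsub
      (by rw [class_card h hs hf, class_card h hs hb])).symm
  have hem : e ∈ ({b, d1, d2} : Finset (Finset P)) := heq ▸ he
  simp only [Finset.mem_insert, Finset.mem_singleton] at hem
  rcases hem with rfl | rfl | rfl
  · rfl
  · exact hkey e d2 hd1 hd2 heq hD1 hD2 hD12
  · have heq2 : classOf Bs b = {b, e, d1} := by rw [heq, Finset.pair_comm d1 e]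
    exact hkey e d1 hd2 hd1 heq2 hD2 hD1 hD12.symm


lemma card_Bs (h : IsSTSOn s Bs) (hs : s.card = 9) : Bs.card = 12 := by
  have hkey : s.powersetCard 2 = Bs.biUnion (fun b => b.powersetCard 2) := by
    ext t
    simp only [Finset.mem_powersetCard, Finset.mem_biUnion]
    constructor
    · rintro ⟨hts, htc⟩
      obtain ⟨p, q, hpq, rfl⟩ := Finset.card_eq_two.mp htc
      have hps : p ∈ s := hts (by simp)
      have hqs : q ∈ s := hts (by simp)
      obtain ⟨b, hb, hpb, hqb⟩ := exists_block h hps hqs hpq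
      refine ⟨b, hb, ?_, htc⟩
      intro t ht
      simp only [Finset.mem_insert, Finset.mem_singleton] at ht
      rcases ht with rfl | rfl <;> assumption
    · rintro ⟨b, hb, htb, htc⟩
      exact ⟨htb.trans (block_sub h hb), htc⟩
  have hdisj : ∀ b ∈ Bs, ∀ b' ∈ Bs, b ≠ b' →
      Disjoint (b.powersetCard 2) (b'.powersetCard 2) := by
    intro b hb b' hb' hne
    rw [Finset.disjoint_left]
    intro t ht ht'
    rw [Finset.mem_powersetCard] at ht ht'
    obtain ⟨p, q, hpq, rfl⟩ := Finset.card_eq_two.mp ht.2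
    have hp : p ∈ b := ht.1 (by simp)
    have hq : q ∈ b := ht.1 (by simp)
    have hp' : p ∈ b' := ht'.1 (by simp)
    have hq' : q ∈ b' := ht'.1 (by simp)
    exact hne (block_unique h hb hb' hpq hp hq hp' hq')
  have hc1 : (s.powersetCard 2).card = 36 := by
    rw [Finset.card_powersetCard, hs]; decide
  have hc2 : (s.powersetCard 2).card = ∑ b ∈ Bs, (b.powersetCard 2).card := by
    rw [hkey, Finset.card_biUnion hdisj]
  have hc3 : ∀ b ∈ Bs, (b.powersetCard 2).card = 3 := by
    intro b hb
    rw [Finset.card_powersetCard, block_card h hb]; decide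
  rw [hc1, Finset.sum_congr rfl hc3, Finset.sum_const, smul_eq_mul] at hc2
  omega

lemma card_classes (h : IsSTSOn s Bs) (hs : s.card = 9) :
    (Bs.image (classOf Bs)).card = 4 := by
  set Cs := Bs.image (classOf Bs) with hCs
  have hcover : Bs = Cs.biUnion id := by
    apply Finset.Subset.antisymm
    · intro b hb
      rw [Finset.mem_biUnion]
      exact ⟨classOf Bs b, Finset.mem_image_of_mem _ hb, mem_classOf_self _ _⟩
    · intro b hb
      rw [Finset.mem_biUnion] at hb
      obtain ⟨C, hC, hbC⟩ := hb
      obtain ⟨b', hb', rfl⟩ := Finset.mem_image.mp hC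
      exact classOf_subset hb' hbC
  have hdisj : ∀ C ∈ Cs, ∀ C' ∈ Cs, C ≠ C' → Disjoint C C' := by
    intro C hC C' hC' hne
    obtain ⟨b, hb, rfl⟩ := Finset.mem_image.mp hC
    obtain ⟨b', hb', rfl⟩ := Finset.mem_image.mp hC'
    rw [Finset.disjoint_left]
    intro e he he'
    exact hne ((class_eq_of_mem h hs hb he).symm.trans (class_eq_of_mem h hs hb' he'))
  have h12 : (Cs.biUnion id).card = ∑ C ∈ Cs, C.card := Finset.card_biUnion hdisj
  have hc3 : ∀ C ∈ Cs, C.card = 3 := by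
    intro C hC
    obtain ⟨b, hb, rfl⟩ := Finset.mem_image.mp hC
    exact class_card h hs hb
  rw [← hcover, card_Bs h hs, Finset.sum_congr rfl hc3, Finset.sum_const, smul_eq_mul] at h12
  omega

/-- An STS on a 9-element set is resolvable into 4 parallel classes. -/
lemma sts9_resolvable (h : IsSTSOn s Bs) (hs : s.card = 9) :
    ∃ D : Fin 4 → Finset (Finset P),
      (∀ k, D k ⊆ Bs) ∧
      (∀ k, ∀ b ∈ D k, ∀ b' ∈ D k, b ≠ b' → Disjoint b b') ∧
      (∀ k, (D k).biUnion id = s) ∧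
      (∀ k k', k ≠ k' → Disjoint (D k) (D k')) ∧
      (∀ b ∈ Bs, ∃ k, b ∈ D k) := by
  set Cs := Bs.image (classOf Bs) with hCs
  have e4 : {C // C ∈ Cs} ≃ Fin 4 := by
    apply Fintype.equivFinOfCardEq
    rw [Fintype.card_coe, card_classes h hs]
  refine ⟨fun k => (e4.symm k : _), ?_, ?_, ?_, ?_, ?_⟩
  · intro k
    obtain ⟨b, hb, hbe⟩ := Finset.mem_image.mp (e4.symm k).2
    dsimp only
    rw [← hbe]
    exact classOf_subset hb
  · intro k
    obtain ⟨b, hb, hbe⟩ := Finset.mem_image.mp (e4.symm k).2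
    dsimp only
    rw [← hbe]
    exact class_pairwise h hs hb
  · intro k
    obtain ⟨b, hb, hbe⟩ := Finset.mem_image.mp (e4.symm k).2
    dsimp only
    rw [← hbe]
    exact class_biUnion h hs hb
  · intro k k' hne
    obtain ⟨b, hb, hbe⟩ := Finset.mem_image.mp (e4.symm k).2
    obtain ⟨b', hb', hbe'⟩ := Finset.mem_image.mp (e4.symm k').2
    dsimp only
    rw [← hbe, ← hbe']
    rw [Finset.disjoint_left]
    intro e he he'
    have : classOf Bs b = classOf Bs b' :=
      (class_eq_of_mem h hs hb he).symm.trans (class_eq_of_mem h hs hb' he')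
    apply hne
    have : (e4.symm k : Finset (Finset P)) = (e4.symm k' : _) := by rw [← hbe, ← hbe', this]
    have h2 : e4.symm k = e4.symm k' := Subtype.ext this
    exact e4.symm.injective.eq_iff.mp h2 ▸ rfl
  · intro b hb
    refine ⟨e4 ⟨classOf Bs b, Finset.mem_image_of_mem _ hb⟩, ?_⟩
    dsimp only
    rw [e4.symm_apply_apply]
    exact mem_classOf_self _ _

end STS9

/-- Let `B` be a Steiner triple system on 27 points with a `(3,2)`-decomposition into
three groups `G 0, G 1, G 2` of size 9: the blocks inside each group form an STS on it,
every other block meets all three groups, and every pair of points from two different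
groups lies in exactly one block meeting all three groups (a transversal design `TD[3;9]`
given by a Latin square of order 9).  If that Latin square has an orthogonal mate, then
`B` is resolvable; its block set is partitioned into 13 parallel classes. -/
theorem sts27_decomposition_resolvable {P : Type*} [Fintype P] [DecidableEq P]
    (hP : Fintype.card P = 27) (B : Finset (Finset P)) (hB : IsSTS B)
    (G : ZMod 3 → Finset P)
    -- the three groups partition the points and have size 9
    (hGdisj : ∀ i j, i ≠ j → Disjoint (G i) (G j))
    (hGcover : Finset.univ.biUnion G = Finset.univ)
    (hGcard : ∀ i, (G i).card = 9)
    -- the blocks inside each group form a sub-STS on that group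
    (hSub : ∀ i, IsSTSOn (G i) (B.filter fun b => b ⊆ G i))
    -- every other block meets all three groups
    (hCross : ∀ b ∈ B, (¬ ∃ i, b ⊆ G i) →
      (b ∩ G 0).Nonempty ∧ (b ∩ G 1).Nonempty ∧ (b ∩ G 2).Nonempty)
    -- every pair of points from two different groups lies in exactly one cross block
    (hTD : ∀ i j : ZMod 3, i ≠ j → ∀ p ∈ G i, ∀ q ∈ G j,
      ∃! b, b ∈ B ∧ (b ∩ G 0).Nonempty ∧ (b ∩ G 1).Nonempty ∧ (b ∩ G 2).Nonempty ∧
        p ∈ b ∧ q ∈ b)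
    -- the Latin square of order 9 of the transversal design has an orthogonal mate
    (hmate : ∀ (φ₀ : {p // p ∈ G 0} ≃ Fin 9) (φ₁ : {p // p ∈ G 1} ≃ Fin 9)
        (φ₂ : {p // p ∈ G 2} ≃ Fin 9) (L : Fin 9 → Fin 9 → Fin 9),
      (∀ i j m, L i j = m ↔
        ({(φ₀.symm i : P), (φ₁.symm j : P), (φ₂.symm m : P)} : Finset P) ∈ B) →
      ∃ M, IsLatinSquare M ∧ AreOrthogonal L M) :
    IsResolvable B ∧
      ∃ F : Finpartition B, F.parts.card = 13 ∧ ∀ C ∈ F.parts, IsParallelClass C := by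
  classical
  -- basic group facts
  have hGeq : ∀ (k k' : ZMod 3) (a : P), a ∈ G k → a ∈ G k' → k = k' := by
    intro k k' a h1 h2
    by_contra hne
    exact Finset.disjoint_left.mp (hGdisj k k' hne) h1 h2
  have hGmem : ∀ p : P, ∃ i, p ∈ G i := by
    intro p
    have : p ∈ Finset.univ.biUnion G := hGcover ▸ Finset.mem_univ p
    rw [Finset.mem_biUnion] at this
    obtain ⟨i, -, hi⟩ := this
    exact ⟨i, hi⟩
  -- the three point-labelling equivalences
  have e0 : {p // p ∈ G 0} ≃ Fin 9 :=
    Fintype.equivFinOfCardEq (by simpa [Fintype.card_coe] using hGcard 0)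
  have e1 : {p // p ∈ G 1} ≃ Fin 9 :=
    Fintype.equivFinOfCardEq (by simpa [Fintype.card_coe] using hGcard 1)
  have e2 : {p // p ∈ G 2} ≃ Fin 9 :=
    Fintype.equivFinOfCardEq (by simpa [Fintype.card_coe] using hGcard 2)
  -- construct the Latin square of the transversal design
  obtain ⟨L, hL⟩ : ∃ L : Fin 9 → Fin 9 → Fin 9, ∀ i j m, L i j = m ↔
      ({((e0.symm i : {p // p ∈ G 0}) : P), ((e1.symm j : {p // p ∈ G 1}) : P),
        ((e2.symm m : {p // p ∈ G 2}) : P)} : Finset P) ∈ B := by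
    have hTD01 := fun (i j : Fin 9) =>
      hTD 0 1 (by decide) (e0.symm i : {p // p ∈ G 0}) (e0.symm i).2
        (e1.symm j : {p // p ∈ G 1}) (e1.symm j).2
    choose bb hbb using fun i j => hTD01 i j
    have hb2 : ∀ i j, ((bb i j) ∩ G 2).Nonempty := fun i j => (hbb i j).1.2.2.2.1
    choose r hr using fun i j => hb2 i j
    have hrb : ∀ i j, r i j ∈ bb i j := fun i j => (Finset.mem_inter.mp (hr i j)).1
    have hrG : ∀ i j, r i j ∈ G 2 := fun i j => (Finset.mem_inter.mp (hr i j)).2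
    refine ⟨fun i j => e2 ⟨r i j, hrG i j⟩, ?_⟩
    intro i j m
    have hbB : bb i j ∈ B := (hbb i j).1.1
    have hp : ((e0.symm i : {p // p ∈ G 0}) : P) ∈ bb i j := (hbb i j).1.2.2.2.2.1
    have hq : ((e1.symm j : {p // p ∈ G 1}) : P) ∈ bb i j := (hbb i j).1.2.2.2.2.2
    have hpG : ((e0.symm i : {p // p ∈ G 0}) : P) ∈ G 0 := (e0.symm i).2
    have hqG : ((e1.symm j : {p // p ∈ G 1}) : P) ∈ G 1 := (e1.symm j).2
    constructor
    · rintro rfl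
      have : ((e2.symm (e2 ⟨r i j, hrG i j⟩) : {p // p ∈ G 2}) : P) = r i j := by
        rw [e2.symm_apply_apply]
      rw [this]
      -- show {p, q, r} = bb i j
      have hpq : ((e0.symm i : {p // p ∈ G 0}) : P) ≠ ((e1.symm j : {p // p ∈ G 1}) : P) :=
        fun e => (by decide : (0 : ZMod 3) ≠ 1) (hGeq 0 1 _ hpG (e ▸ hqG))
      have hpr : ((e0.symm i : {p // p ∈ G 0}) : P) ≠ r i j :=
        fun e => (by decide : (0 : ZMod 3) ≠ 2) (hGeq 0 2 _ hpG (e ▸ hrG i j))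
      have hqr : ((e1.symm j : {p // p ∈ G 1}) : P) ≠ r i j :=
        fun e => (by decide : (1 : ZMod 3) ≠ 2) (hGeq 1 2 _ hqG (e ▸ hrG i j))
      have hsub : ({((e0.symm i : {p // p ∈ G 0}) : P), ((e1.symm j : {p // p ∈ G 1}) : P),
          r i j} : Finset P) ⊆ bb i j := by
        intro t ht
        simp only [Finset.mem_insert, Finset.mem_singleton] at ht
        rcases ht with rfl | rfl | rfl
        · exact hp
        · exact hq
        · exact hrb i j
      have hcard : ({((e0.symm i : {p // p ∈ G 0}) : P), ((e1.symm j : {p // p ∈ G 1}) : P),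
          r i j} : Finset P).card = 3 := by
        rw [Finset.card_insert_of_notMem (by simp [hpq, hpr]),
          Finset.card_insert_of_notMem (by simp [hqr]), Finset.card_singleton]
      have : ({((e0.symm i : {p // p ∈ G 0}) : P), ((e1.symm j : {p // p ∈ G 1}) : P),
          r i j} : Finset P) = bb i j :=
        Finset.eq_of_subset_of_card_le hsub (by rw [hB.1 _ hbB, hcard])
      rw [this]
      exact hbB
    · intro hcB
      -- the given block equals bb i j by uniqueness
      set c : Finset P := {((e0.symm i : {p // p ∈ G 0}) : P), ((e1.symm j : {p // p ∈ G 1}) : P),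
        ((e2.symm m : {p // p ∈ G 2}) : P)} with hc
      have hmG : ((e2.symm m : {p // p ∈ G 2}) : P) ∈ G 2 := (e2.symm m).2
      have hcb : c = bb i j := by
        apply (hbb i j).2
        refine ⟨hcB, ?_, ?_, ?_, ?_, ?_⟩
        · exact ⟨_, Finset.mem_inter.mpr ⟨by simp [hc], hpG⟩⟩
        · exact ⟨_, Finset.mem_inter.mpr ⟨by simp [hc], hqG⟩⟩
        · exact ⟨_, Finset.mem_inter.mpr ⟨by simp [hc], hmG⟩⟩
        · simp [hc]
        · simp [hc]
      have hrc : r i j ∈ c := hcb ▸ hrb i j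
      rw [hc] at hrc
      simp only [Finset.mem_insert, Finset.mem_singleton] at hrc
      rcases hrc with he | he | he
      · exact absurd (hGeq 2 0 _ (he ▸ hrG i j) hpG) (by decide)
      · exact absurd (hGeq 2 1 _ (he ▸ hrG i j) hqG) (by decide)
      · have h5 : (⟨r i j, hrG i j⟩ : {p // p ∈ G 2}) = e2.symm m := Subtype.ext he
        show e2 ⟨r i j, hrG i j⟩ = m
        rw [h5, e2.apply_symm_apply]
  obtain ⟨M, hM, horth⟩ := hmate e0 e1 e2 L hL
  -- point labels
  set x0 : Fin 9 → P := fun i => ((e0.symm i : {p // p ∈ G 0}) : P) with hx0def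
  set x1 : Fin 9 → P := fun j => ((e1.symm j : {p // p ∈ G 1}) : P) with hx1def
  set x2 : Fin 9 → P := fun m => ((e2.symm m : {p // p ∈ G 2}) : P) with hx2def
  have hx0G : ∀ i, x0 i ∈ G 0 := fun i => (e0.symm i).2
  have hx1G : ∀ j, x1 j ∈ G 1 := fun j => (e1.symm j).2
  have hx2G : ∀ m, x2 m ∈ G 2 := fun m => (e2.symm m).2
  have hx0inj : Function.Injective x0 := fun i i' h =>
    e0.symm.injective (Subtype.ext h)
  have hx1inj : Function.Injective x1 := fun i i' h =>
    e1.symm.injective (Subtype.ext h)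
  have hx2inj : Function.Injective x2 := fun i i' h =>
    e2.symm.injective (Subtype.ext h)
  have hx0surj : ∀ p ∈ G 0, ∃ i, x0 i = p := by
    intro p hp
    refine ⟨e0 ⟨p, hp⟩, ?_⟩
    show ((e0.symm (e0 ⟨p, hp⟩) : {p // p ∈ G 0}) : P) = p
    rw [e0.symm_apply_apply]
  have hx1surj : ∀ p ∈ G 1, ∃ i, x1 i = p := by
    intro p hp
    refine ⟨e1 ⟨p, hp⟩, ?_⟩
    show ((e1.symm (e1 ⟨p, hp⟩) : {p // p ∈ G 1}) : P) = p
    rw [e1.symm_apply_apply]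
  have hx2surj : ∀ p ∈ G 2, ∃ i, x2 i = p := by
    intro p hp
    refine ⟨e2 ⟨p, hp⟩, ?_⟩
    show ((e2.symm (e2 ⟨p, hp⟩) : {p // p ∈ G 2}) : P) = p
    rw [e2.symm_apply_apply]
  have hx01 : ∀ i j, x0 i ≠ x1 j :=
    fun i j e => (by decide : (0 : ZMod 3) ≠ 1) (hGeq 0 1 _ (hx0G i) (e ▸ hx1G j))
  have hx02 : ∀ i j, x0 i ≠ x2 j :=
    fun i j e => (by decide : (0 : ZMod 3) ≠ 2) (hGeq 0 2 _ (hx0G i) (e ▸ hx2G j))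
  have hx12 : ∀ i j, x1 i ≠ x2 j :=
    fun i j e => (by decide : (1 : ZMod 3) ≠ 2) (hGeq 1 2 _ (hx1G i) (e ▸ hx2G j))
  -- the cross blocks
  set bk : Fin 9 × Fin 9 → Finset P := fun ij => {x0 ij.1, x1 ij.2, x2 (L ij.1 ij.2)}
    with hbkdef
  have hbkB : ∀ ij, bk ij ∈ B := fun ij => (hL ij.1 ij.2 (L ij.1 ij.2)).mp rfl
  have hbkmem : ∀ (ij) (t : P), t ∈ bk ij ↔
      t = x0 ij.1 ∨ t = x1 ij.2 ∨ t = x2 (L ij.1 ij.2) := by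
    intro ij t
    show t ∈ ({x0 ij.1, x1 ij.2, x2 (L ij.1 ij.2)} : Finset P) ↔ _
    simp [Finset.mem_insert, Finset.mem_singleton]
  have hbkx0 : ∀ ij, x0 ij.1 ∈ bk ij := fun ij => (hbkmem ij _).mpr (Or.inl rfl)
  have hbkx1 : ∀ ij, x1 ij.2 ∈ bk ij := fun ij => (hbkmem ij _).mpr (Or.inr (Or.inl rfl))
  have hbkx2 : ∀ ij, x2 (L ij.1 ij.2) ∈ bk ij :=
    fun ij => (hbkmem ij _).mpr (Or.inr (Or.inr rfl))
  have hbkinj : ∀ ij ij', bk ij = bk ij' → ij = ij' := by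
    intro ij ij' h
    have h0 : x0 ij.1 ∈ bk ij' := h ▸ hbkx0 ij
    rcases (hbkmem ij' _).mp h0 with he | he | he
    · have hi : ij.1 = ij'.1 := hx0inj he
      have h1 : x1 ij.2 ∈ bk ij' := h ▸ hbkx1 ij
      rcases (hbkmem ij' _).mp h1 with he' | he' | he'
      · exact absurd he' (hx01 _ _).symm
      · exact Prod.ext hi (hx1inj he')
      · exact absurd he' (hx12 _ _)
    · exact absurd he (hx01 _ _)
    · exact absurd he (hx02 _ _)
  have hbknotsub : ∀ ij k, ¬ (bk ij ⊆ G k) := by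
    intro ij k hsub
    have h0 : k = 0 := (hGeq k 0 _ (hsub (hbkx0 ij)) (hx0G _)).symm ▸ rfl
    have h0' : k = 0 := hGeq k 0 _ (hsub (hbkx0 ij)) (hx0G _) ▸ rfl
    have h1 : k = 1 := hGeq k 1 _ (hsub (hbkx1 ij)) (hx1G _) ▸ rfl
    have : (0 : ZMod 3) = 1 := by
      rw [← h0', ← h1]
    exact (by decide : (0 : ZMod 3) ≠ 1) this
  have hcrossrep : ∀ b ∈ B, (¬ ∃ i, b ⊆ G i) → ∃ ij, b = bk ij := by
    intro b hbB hnsub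
    obtain ⟨⟨x, hx⟩, ⟨y, hy⟩, ⟨z, hz⟩⟩ := hCross b hbB hnsub
    rw [Finset.mem_inter] at hx hy hz
    obtain ⟨i, rfl⟩ := hx0surj x hx.2
    obtain ⟨j, rfl⟩ := hx1surj y hy.2
    obtain ⟨m, rfl⟩ := hx2surj z hz.2
    have hsub : ({x0 i, x1 j, x2 m} : Finset P) ⊆ b := by
      intro t ht
      simp only [Finset.mem_insert, Finset.mem_singleton] at ht
      rcases ht with rfl | rfl | rfl
      · exact hx.1
      · exact hy.1
      · exact hz.1
    have hcard : ({x0 i, x1 j, x2 m} : Finset P).card = 3 := by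
      rw [Finset.card_insert_of_notMem (by simp [hx01 i j, hx02 i m]),
        Finset.card_insert_of_notMem (by simp [hx12 j m]), Finset.card_singleton]
    have heq : ({x0 i, x1 j, x2 m} : Finset P) = b :=
      Finset.eq_of_subset_of_card_le hsub (by rw [hB.1 b hbB, hcard])
    have hLij : L i j = m := (hL i j m).mpr (heq ▸ hbB)
    refine ⟨(i, j), ?_⟩
    rw [← heq]
    show ({x0 i, x1 j, x2 m} : Finset P) = {x0 i, x1 j, x2 (L i j)}
    rw [hLij]
  -- resolutions of the three sub-STS(9)s
  choose D hD1 hD2 hD3 hD4 hD5 using fun i : ZMod 3 => STS9.sts9_resolvable (hSub i) (hGcard i)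
  have hDsubB : ∀ i k, ∀ b ∈ D i k, b ∈ B ∧ b ⊆ G i := by
    intro i k b hb
    have := hD1 i k hb
    rw [Finset.mem_filter] at this
    exact this
  -- the thirteen parallel classes
  set cg : Fin 4 → Finset (Finset P) :=
    fun k => (Finset.univ : Finset (ZMod 3)).biUnion (fun i => D i k) with hcgdef
  set cm : Fin 9 → Finset (Finset P) :=
    fun m => ((Finset.univ : Finset (Fin 9 × Fin 9)).filter
      (fun ij => M ij.1 ij.2 = m)).image bk with hcmdef
  have hcgmem : ∀ (k) (b : Finset P), b ∈ cg k ↔ ∃ i, b ∈ D i k := by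
    intro k b
    rw [hcgdef]
    simp [Finset.mem_biUnion]
  have hcmmem : ∀ (m) (b : Finset P), b ∈ cm m ↔
      ∃ ij : Fin 9 × Fin 9, M ij.1 ij.2 = m ∧ bk ij = b := by
    intro m b
    rw [hcmdef]
    simp [Finset.mem_image, Finset.mem_filter]
  have hz3 : ∀ z : ZMod 3, z = 0 ∨ z = 1 ∨ z = 2 := by decide
  have hcgsubB : ∀ k, cg k ⊆ B := by
    intro k b hb
    obtain ⟨i, hbi⟩ := (hcgmem k b).mp hb
    exact (hDsubB i k b hbi).1
  have hcmsubB : ∀ m, cm m ⊆ B := by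
    intro m b hb
    obtain ⟨ij, -, rfl⟩ := (hcmmem m b).mp hb
    exact hbkB ij
  -- cg k is a parallel class
  have hcgPC : ∀ k, IsParallelClass (cg k) := by
    intro k
    constructor
    · intro b hb b' hb' hne
      obtain ⟨i, hbi⟩ := (hcgmem k b).mp hb
      obtain ⟨i', hbi'⟩ := (hcgmem k b').mp hb'
      by_cases hii : i = i'
      · subst hii
        exact hD2 i k b hbi b' hbi' hne
      · exact Finset.disjoint_of_subset_left (hDsubB i k b hbi).2
          (Finset.disjoint_of_subset_right (hDsubB i' k b' hbi').2 (hGdisj i i' hii))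
    · rw [Finset.eq_univ_iff_forall]
      intro p
      obtain ⟨i, hp⟩ := hGmem p
      have : p ∈ (D i k).biUnion id := by rw [hD3 i k]; exact hp
      rw [Finset.mem_biUnion] at this
      obtain ⟨b, hb, hpb⟩ := this
      exact Finset.mem_biUnion.mpr ⟨b, (hcgmem k b).mpr ⟨i, hb⟩, hpb⟩
  -- cm m is a parallel class
  have hcmPC : ∀ m, IsParallelClass (cm m) := by
    intro m
    constructor
    · intro b hb b' hb' hne
      obtain ⟨ij, hm1, rfl⟩ := (hcmmem m b).mp hb
      obtain ⟨ij', hm1', rfl⟩ := (hcmmem m b').mp hb'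
      rw [Finset.disjoint_left]
      intro t ht ht'
      have hca := (hbkmem ij t).mp ht
      have hcb := (hbkmem ij' t).mp ht'
      have hijne : ij ≠ ij' := fun e => hne (congrArg bk e)
      rcases hca with h1 | h1 | h1 <;> rcases hcb with h2 | h2 | h2
      · have hi : ij.1 = ij'.1 := hx0inj (h1.symm.trans h2)
        rw [← hi] at hm1'
        have hj : ij.2 = ij'.2 := (hM.1 ij.1).1 (hm1.trans hm1'.symm)
        exact hijne (Prod.ext hi hj)
      · exact hx01 _ _ (h1.symm.trans h2)
      · exact hx02 _ _ (h1.symm.trans h2)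
      · exact hx01 _ _ (h2.symm.trans h1)
      · have hj : ij.2 = ij'.2 := hx1inj (h1.symm.trans h2)
        rw [← hj] at hm1'
        have hi : ij.1 = ij'.1 := (hM.2 ij.2).1 (hm1.trans hm1'.symm)
        exact hijne (Prod.ext hi hj)
      · exact hx12 _ _ (h1.symm.trans h2)
      · exact hx02 _ _ (h2.symm.trans h1)
      · exact hx12 _ _ (h2.symm.trans h1)
      · have hLL : L ij.1 ij.2 = L ij'.1 ij'.2 := hx2inj (h1.symm.trans h2)
        have : (L ij.1 ij.2, M ij.1 ij.2) = (L ij'.1 ij'.2, M ij'.1 ij'.2) := by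
          rw [hLL, hm1, hm1']
        exact hijne (horth this)
    · rw [Finset.eq_univ_iff_forall]
      intro p
      obtain ⟨kk, hp⟩ := hGmem p
      rcases hz3 kk with rfl | rfl | rfl
      · obtain ⟨i, rfl⟩ := hx0surj p hp
        obtain ⟨j, hj⟩ := (hM.1 i).2 m
        exact Finset.mem_biUnion.mpr ⟨bk (i, j), (hcmmem m _).mpr ⟨(i, j), hj, rfl⟩,
          hbkx0 (i, j)⟩
      · obtain ⟨j, rfl⟩ := hx1surj p hp
        obtain ⟨i, hi⟩ := (hM.2 j).2 m
        exact Finset.mem_biUnion.mpr ⟨bk (i, j), (hcmmem m _).mpr ⟨(i, j), hi, rfl⟩,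
          hbkx1 (i, j)⟩
      · obtain ⟨mm, rfl⟩ := hx2surj p hp
        have hsurj : Function.Surjective (fun p : Fin 9 × Fin 9 => (L p.1 p.2, M p.1 p.2)) :=
          Finite.injective_iff_surjective.mp horth
        obtain ⟨ij, hij⟩ := hsurj (mm, m)
        have hij1 : L ij.1 ij.2 = mm := congrArg Prod.fst hij
        have hij2 : M ij.1 ij.2 = m := congrArg Prod.snd hij
        refine Finset.mem_biUnion.mpr ⟨bk ij, (hcmmem m _).mpr ⟨ij, hij2, rfl⟩, ?_⟩
        rw [← hij1]
        exact hbkx2 ij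
  -- nonemptiness
  have hcgne : ∀ k, (cg k).Nonempty := by
    intro k
    have hG0ne : (G 0).Nonempty := by
      rw [← Finset.card_pos, hGcard 0]; norm_num
    obtain ⟨p, hp⟩ := hG0ne
    have : p ∈ (D 0 k).biUnion id := by rw [hD3 0 k]; exact hp
    rw [Finset.mem_biUnion] at this
    obtain ⟨b, hb, -⟩ := this
    exact ⟨b, (hcgmem k b).mpr ⟨0, hb⟩⟩
  have hcmne : ∀ m, (cm m).Nonempty := by
    intro m
    obtain ⟨j, hj⟩ := (hM.1 0).2 m
    exact ⟨bk (0, j), (hcmmem m _).mpr ⟨(0, j), hj, rfl⟩⟩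
  -- pairwise disjointness of the classes
  have hbne : ∀ b ∈ B, b.Nonempty := by
    intro b hb
    rw [← Finset.card_pos, hB.1 b hb]; norm_num
  have hcgdisj : ∀ k k', k ≠ k' → Disjoint (cg k) (cg k') := by
    intro k k' hne
    rw [Finset.disjoint_left]
    intro b hb hb'
    obtain ⟨i, hbi⟩ := (hcgmem k b).mp hb
    obtain ⟨i', hbi'⟩ := (hcgmem k' b).mp hb'
    obtain ⟨t, ht⟩ := hbne b (hDsubB i k b hbi).1
    have hii : i = i' := hGeq i i' t ((hDsubB i k b hbi).2 ht) ((hDsubB i' k' b hbi').2 ht)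
    subst hii
    exact Finset.disjoint_left.mp (hD4 i k k' hne) hbi hbi'
  have hcgcm : ∀ k m', Disjoint (cg k) (cm m') := by
    intro k m'
    rw [Finset.disjoint_left]
    intro b hb hb'
    obtain ⟨i, hbi⟩ := (hcgmem k b).mp hb
    obtain ⟨ij, -, rfl⟩ := (hcmmem m' b).mp hb'
    exact hbknotsub ij i (hDsubB i k _ hbi).2
  have hcmdisj : ∀ m m', m ≠ m' → Disjoint (cm m) (cm m') := by
    intro m m' hne
    rw [Finset.disjoint_left]
    intro b hb hb'
    obtain ⟨ij, hm1, rfl⟩ := (hcmmem m _).mp hb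
    obtain ⟨ij', hm1', heq⟩ := (hcmmem m' _).mp hb'
    have : ij' = ij := hbkinj _ _ heq
    subst this
    exact hne (hm1 ▸ hm1')
  -- the partition
  set parts : Finset (Finset (Finset P)) :=
    Finset.univ.image cg ∪ Finset.univ.image cm with hpartsdef
  have hpartsiff : ∀ C, C ∈ parts ↔ (∃ k, cg k = C) ∨ (∃ m, cm m = C) := by
    intro C
    rw [hpartsdef]
    simp [Finset.mem_union, Finset.mem_image]
  have hpartsPC : ∀ C ∈ parts, IsParallelClass C := by
    intro C hC
    rcases (hpartsiff C).mp hC with ⟨k, rfl⟩ | ⟨m, rfl⟩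
    · exact hcgPC k
    · exact hcmPC m
  have hpairwise : (↑parts : Set (Finset (Finset P))).PairwiseDisjoint id := by
    intro C hC C' hC' hne
    rw [Finset.mem_coe] at hC hC'
    rcases (hpartsiff C).mp hC with ⟨k, rfl⟩ | ⟨m, rfl⟩ <;>
      rcases (hpartsiff C').mp hC' with ⟨k', rfl⟩ | ⟨m', rfl⟩
    · exact hcgdisj k k' (fun e => hne (congrArg cg e))
    · exact hcgcm k m'
    · exact (hcgcm k' m).symm
    · exact hcmdisj m m' (fun e => hne (congrArg cm e))
  have hsupparts : parts.sup id = B := by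
    apply le_antisymm
    · apply Finset.sup_le
      intro C hC
      rcases (hpartsiff C).mp hC with ⟨k, rfl⟩ | ⟨m, rfl⟩
      · exact hcgsubB k
      · exact hcmsubB m
    · intro b hb
      rw [Finset.mem_sup]
      by_cases hsub : ∃ i, b ⊆ G i
      · obtain ⟨i, hbsub⟩ := hsub
        have hbf : b ∈ B.filter (fun b => b ⊆ G i) := Finset.mem_filter.mpr ⟨hb, hbsub⟩
        obtain ⟨k, hk⟩ := hD5 i b hbf
        exact ⟨cg k, (hpartsiff _).mpr (Or.inl ⟨k, rfl⟩), (hcgmem k b).mpr ⟨i, hk⟩⟩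
      · obtain ⟨ij, rfl⟩ := hcrossrep b hb hsub
        exact ⟨cm (M ij.1 ij.2), (hpartsiff _).mpr (Or.inr ⟨_, rfl⟩),
          (hcmmem _ _).mpr ⟨ij, rfl, rfl⟩⟩
  have hbotparts : ⊥ ∉ parts := by
    intro hbot
    rcases (hpartsiff ⊥).mp hbot with ⟨k, hk⟩ | ⟨m, hm⟩
    · obtain ⟨b, hbk⟩ := hcgne k
      rw [hk] at hbk
      exact Finset.notMem_empty b hbk
    · obtain ⟨b, hbm⟩ := hcmne m
      rw [hm] at hbm
      exact Finset.notMem_empty b hbm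
  have hcard13 : parts.card = 13 := by
    have hdisjim : Disjoint (Finset.univ.image cg) (Finset.univ.image cm) := by
      rw [Finset.disjoint_left]
      intro C hC hC'
      obtain ⟨k, -, rfl⟩ := Finset.mem_image.mp hC
      obtain ⟨m, -, hm⟩ := Finset.mem_image.mp hC'
      obtain ⟨b, hbk⟩ := hcgne k
      have hbm : b ∈ cm m := hm ▸ hbk
      obtain ⟨i, hbi⟩ := (hcgmem k b).mp hbk
      obtain ⟨ij, -, rfl⟩ := (hcmmem m _).mp hbm
      exact hbknotsub ij i (hDsubB i k _ hbi).2
    have hcginj : Function.Injective cg := by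
      intro k k' he
      by_contra hne
      obtain ⟨b, hbk⟩ := hcgne k
      exact Finset.disjoint_left.mp (hcgdisj k k' hne) hbk (he ▸ hbk)
    have hcminj : Function.Injective cm := by
      intro m m' he
      by_contra hne
      obtain ⟨b, hbm⟩ := hcmne m
      exact Finset.disjoint_left.mp (hcmdisj m m' hne) hbm (he ▸ hbm)
    rw [hpartsdef, Finset.card_union_of_disjoint hdisjim,
      Finset.card_image_of_injective _ hcginj, Finset.card_image_of_injective _ hcminj,
      Finset.card_univ, Finset.card_univ, Fintype.card_fin, Fintype.card_fin]
  have hsupIndep : parts.SupIndep id := Finset.supIndep_iff_pairwiseDisjoint.mpr hpairwise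
  exact ⟨⟨⟨parts, hsupIndep, hsupparts, hbotparts⟩, hpartsPC⟩,
    ⟨parts, hsupIndep, hsupparts, hbotparts⟩, hcard13, hpartsPC⟩
end

section
/- Let k ≥ r ≥ 2 be integers. If a Steiner triple system S on 3^k points has 3-rank at most 3^k − r, then S admits a (k,r)-decomposition: there is a partition of its point set into 3^(r-1) groups G_x of size T = 3^(k-r+1), indexed by x ∈ (ZMod 3)^(r-1), such that (i) for each x the blocks contained in G_x form a Steiner triple system on G_x (with T(T−1)/6 blocks), (ii) every block not contained in a single group has its three points in three distinct groups G_x, G_y, G_z with x + y + z = 0, and (iii) for each line {x,y,z} of AG(r-1,3) the set of blocks meeting all three of G_x, G_y, G_z forms a transversal design TD[3;T], i.e. it has T^2 blocks and every pair of points from two different groups among G_x, G_y, G_z lies in exactly one of them. -/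
/-- The block-point incidence matrix over `ZMod 3`. -/
def incMatrix3 {P : Type*} [DecidableEq P] (B : Finset (Finset P)) :
    Matrix {b // b ∈ B} P (ZMod 3) :=
  fun b p => if p ∈ b.1 then 1 else 0

open Finset

section AuxiliarySTS
variable {P : Type*} [DecidableEq P] {B : Finset (Finset P)}

lemma block_uniq (hB : IsSTS B) {p q : P} (hpq : p ≠ q) {b b' : Finset P}
    (hb : b ∈ B) (hb' : b' ∈ B) (hpb : p ∈ b) (hqb : q ∈ b) (hpb' : p ∈ b') (hqb' : q ∈ b') :
    b = b' := by
  obtain ⟨c, -, hu⟩ := hB.2 p q hpq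
  rw [hu b ⟨hb, hpb, hqb⟩, hu b' ⟨hb', hpb', hqb'⟩]


lemma exists_third (hB : IsSTS B) {p q : P} (hpq : p ≠ q) :
    ∃ s, s ≠ p ∧ s ≠ q ∧ {p, q, s} ∈ B := by
  obtain ⟨b, ⟨hb, hpb, hqb⟩, -⟩ := hB.2 p q hpq
  have hsub : ({p, q} : Finset P) ⊆ b := by
    intro x hx; rw [mem_insert, mem_singleton] at hx; rcases hx with rfl | rfl <;> assumption
  have hcard2 : ({p, q} : Finset P).card = 2 := by rw [card_insert_of_notMem (by simpa), card_singleton]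
  have h1 : (b \ {p, q}).card = 1 := by
    rw [card_sdiff_of_subset hsub, hB.1 b hb, hcard2]
  obtain ⟨s, hs⟩ := card_eq_one.mp h1
  have hsmem : s ∈ b \ ({p, q} : Finset P) := hs ▸ mem_singleton_self s
  rw [mem_sdiff, mem_insert, mem_singleton] at hsmem
  refine ⟨s, fun h => hsmem.2 (Or.inl h), fun h => hsmem.2 (Or.inr h), ?_⟩
  have : b = {p, q, s} := by
    apply Finset.eq_of_subset_of_card_le
    · intro x hx
      by_cases hx2 : x ∈ ({p, q} : Finset P)
      · rw [mem_insert, mem_singleton] at hx2; rcases hx2 with rfl | rfl <;> simp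
      · have : x ∈ b \ ({p,q} : Finset P) := mem_sdiff.mpr ⟨hx, hx2⟩
        rw [hs, mem_singleton] at this; subst this; simp
    · rw [hB.1 b hb]
      refine (card_insert_le _ _).trans (Nat.succ_le_succ ?_)
      exact (card_insert_le _ _).trans (by simp)
  exact this ▸ hb


lemma sum_three {M : Type*} [AddCommMonoid M] {p q s : P} (hpq : p ≠ q) (hps : p ≠ s)
    (hqs : q ≠ s) (f : P → M) :
    ∑ x ∈ ({p, q, s} : Finset P), f x = f p + f q + f s := by
  rw [sum_insert (by simp [hpq, hps]), sum_insert (by simpa), sum_singleton, add_assoc]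

lemma balanced [Fintype P] (hB : IsSTS B) {k : ℕ} (hP : Fintype.card P = 3 ^ k)
    (h : P → ZMod 3) (hsum : ∀ b ∈ B, ∑ p ∈ b, h p = 0)
    (hnc : ∃ p q : P, h p ≠ h q) (c : ZMod 3) :
    (univ.filter fun p => h p = c).card = 3 ^ (k - 1) := by
  classical
  -- sum of h over a block decomposition
  have hblk : ∀ p q s : P, p ≠ q → s ≠ p → s ≠ q → ({p, q, s} : Finset P) ∈ B →
      h p + h q + h s = 0 := by
    intro p q s hpq hsp hsq hmem
    have := hsum _ hmem
    rwa [sum_three hpq (Ne.symm hsp) (Ne.symm hsq)] at this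
  -- key: if value a is attained, the two other fibers are matched
  have key : ∀ a t : ZMod 3, (∃ p0 : P, h p0 = a) → t ≠ a →
      (univ.filter fun p => h p = t).card = (univ.filter fun p => h p = -a - t).card := by
    intro a t ⟨p0, hp0⟩ hta
    have hthird : ∀ q : P, ∃ s, p0 ≠ q → (s ≠ p0 ∧ s ≠ q ∧ {p0, q, s} ∈ B) := by
      intro q
      by_cases hq : p0 = q
      · exact ⟨p0, fun h => absurd hq h⟩
      · obtain ⟨s, hs⟩ := exists_third hB hq; exact ⟨s, fun _ => hs⟩
    choose σ hσ using hthird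
    have hval : ∀ q : P, p0 ≠ q → h (σ q) = -a - h q := by
      intro q hq
      obtain ⟨h1, h2, h3⟩ := hσ q hq
      have := hblk p0 q _ hq h1 h2 h3
      rw [hp0] at this; linear_combination this
    have huniq3 : ∀ q : P, p0 ≠ q → ∀ s : P, s ≠ p0 → s ≠ q →
        ({p0, q, s} : Finset P) ∈ B → σ q = s := by
      intro q hq s hs1 hs2 hs3
      obtain ⟨h1, h2, h3⟩ := hσ q hq
      have hbeq : ({p0, q, σ q} : Finset P) = {p0, q, s} :=
        block_uniq hB hq h3 hs3 (by simp) (by simp) (by simp) (by simp)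
      have : σ q ∈ ({p0, q, s} : Finset P) := hbeq ▸ (by simp)
      rw [mem_insert, mem_insert, mem_singleton] at this
      rcases this with h' | h' | h'
      · exact absurd h' h1
      · exact absurd h' h2
      · exact h'
    have hne2 : (-a - t) ≠ a := by
      intro hce; apply hta
      have h3 : (3 : ZMod 3) = 0 := rfl
      linear_combination (-1 : ZMod 3) * hce - a * h3
    have hmemne : ∀ q : P, q ∈ univ.filter (fun p => h p = t) → p0 ≠ q := by
      intro q hq he
      rw [mem_filter] at hq
      rw [← he, hp0] at hq; exact hta hq.2.symm
    refine card_bij (fun q _ => σ q) ?_ ?_ ?_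
    · intro q hq
      rw [mem_filter] at hq ⊢
      exact ⟨mem_univ _, by rw [hval q (hmemne q (by rw [mem_filter]; exact hq)), hq.2]⟩
    · intro q1 hq1 q2 hq2 heq
      have hn1 : p0 ≠ q1 := hmemne q1 hq1
      have hn2 : p0 ≠ q2 := hmemne q2 hq2
      obtain ⟨a1, b1, c1⟩ := hσ q1 hn1
      obtain ⟨a2, b2, c2⟩ := hσ q2 hn2
      rw [heq] at c1
      have hbeq : ({p0, q1, σ q2} : Finset P) = {p0, q2, σ q2} :=
        block_uniq hB (Ne.symm (heq ▸ a1)) c1 c2 (by simp) (by simp) (by simp) (by simp)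
      have : q1 ∈ ({p0, q2, σ q2} : Finset P) := hbeq ▸ (by simp)
      rw [mem_insert, mem_insert, mem_singleton] at this
      rcases this with h' | h' | h'
      · exact absurd h'.symm hn1
      · exact h'
      · exact absurd (heq ▸ h'.symm) b1
    · intro s hsmem
      rw [mem_filter] at hsmem
      have hns : p0 ≠ s := by
        intro he; rw [← he, hp0] at hsmem; exact hne2 hsmem.2.symm
      obtain ⟨a1, b1, c1⟩ := hσ s hns
      have hqval : h (σ s) = t := by rw [hval s hns, hsmem.2]; ring
      refine ⟨σ s, mem_filter.mpr ⟨mem_univ _, hqval⟩, ?_⟩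
      refine huniq3 (σ s) (Ne.symm a1) s (Ne.symm hns) (Ne.symm b1) ?_
      have : ({p0, s, σ s} : Finset P) = {p0, σ s, s} := by
        ext x; simp; tauto
      rwa [this] at c1
  -- conclude all fibers equal
  obtain ⟨p, q, hpq⟩ := hnc
  set a := h p with ha
  set b := h q with hb0
  have hk1 : 1 ≤ k := by
    rcases Nat.eq_zero_or_pos k with rfl | hk; swap; · exact hk
    exfalso
    have : Fintype.card P ≤ 1 := by rw [hP]; norm_num
    exact hpq (congrArg h (Fintype.card_le_one_iff.mp this p q))
  have hFab : ∀ c' : ZMod 3, (univ.filter fun p => h p = c').card =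
      (univ.filter fun p => h p = a).card := by
    have e1 : (univ.filter fun x => h x = b).card = (univ.filter fun x => h x = -a - b).card :=
      key a b ⟨p, rfl⟩ (Ne.symm hpq)
    have e2 : (univ.filter fun x => h x = a).card = (univ.filter fun x => h x = -a - b).card := by
      have := key b a ⟨q, rfl⟩ hpq
      rwa [show -b - a = -a - b by ring] at this
    intro c'
    have hall : ∀ x y z : ZMod 3, x ≠ y → z = x ∨ z = y ∨ z = -x - y := by decide
    have hcases : c' = a ∨ c' = b ∨ c' = -a - b := hall a b c' hpq
    rcases hcases with rfl | rfl | rfl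
    · rfl
    · rw [e1, e2]
    · rw [← e2]
  have hsumfib : ∑ c' : ZMod 3, (univ.filter fun p => h p = c').card = 3 ^ k := by
    rw [← hP, Fintype.card, card_eq_sum_card_fiberwise (f := h) (fun x _ => mem_univ _)]
  rw [Finset.sum_congr rfl (fun c' _ => hFab c')] at hsumfib
  simp only [Finset.sum_const, Finset.card_univ] at hsumfib
  have h3 : Fintype.card (ZMod 3) = 3 := by decide
  rw [h3, smul_eq_mul] at hsumfib
  have : (univ.filter fun p => h p = a).card = 3 ^ (k - 1) := by
    have hpow : 3 ^ k = 3 * 3 ^ (k - 1) := by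
      conv_lhs => rw [show k = 1 + (k - 1) by omega]
      rw [pow_add, pow_one]
    omega
  rw [hFab c, this]

end AuxiliarySTS

lemma count_dual {m : ℕ} (y : Fin m → ZMod 3) (hy : y ≠ 0) :
    (univ.filter fun lam : Fin m → ZMod 3 => ∑ i, lam i * y i = 0).card = 3 ^ (m - 1) := by
  classical
  set T : (Fin m → ZMod 3) → ZMod 3 := fun lam => ∑ i, lam i * y i with hT
  show (univ.filter fun lam => T lam = 0).card = 3 ^ (m - 1)
  obtain ⟨j, hj⟩ : ∃ j, y j ≠ 0 := by
    by_contra hcon; push_neg at hcon; exact hy (funext hcon)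
  have hone : ∃ lam0, T lam0 = 1 := by
    refine ⟨Pi.single j (y j)⁻¹, ?_⟩
    simp only [hT]
    rw [Finset.sum_eq_single j]
    · rw [Pi.single_eq_same, inv_mul_cancel₀ hj]
    · intro i _ hij; rw [Pi.single_eq_of_ne hij, zero_mul]
    · intro hmem; exact absurd (mem_univ j) hmem
  obtain ⟨lam0, hlam0⟩ := hone
  have hTadd : ∀ u v : Fin m → ZMod 3, T (u + v) = T u + T v := by
    intro u v
    simp only [hT, Pi.add_apply, add_mul, Finset.sum_add_distrib]
  have hsmul : ∀ c : ZMod 3, T (c • lam0) = c := by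
    intro c
    show ∑ i, (c • lam0) i * y i = c
    simp only [Pi.smul_apply, smul_eq_mul, mul_assoc, ← Finset.mul_sum]
    rw [show ∑ i, lam0 i * y i = T lam0 from rfl, hlam0, mul_one]
  have hfib : ∀ c : ZMod 3,
      (univ.filter fun lam => T lam = c).card = (univ.filter fun lam => T lam = 0).card := by
    intro c
    refine card_nbij' (fun lam => lam - c • lam0) (fun lam => lam + c • lam0) ?_ ?_ ?_ ?_
    · intro lam hl
      simp only [mem_coe, mem_filter] at hl ⊢
      refine ⟨mem_univ _, ?_⟩
      have := hTadd (lam - c • lam0) (c • lam0)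
      rw [sub_add_cancel, hl.2, hsmul] at this
      linear_combination -this
    · intro lam hl
      simp only [mem_coe, mem_filter] at hl ⊢
      refine ⟨mem_univ _, ?_⟩
      rw [hTadd, hl.2, hsmul, zero_add]
    · intro lam _; simp
    · intro lam _; simp
  have hsum : ∑ c : ZMod 3, (univ.filter fun lam => T lam = c).card
      = Fintype.card (Fin m → ZMod 3) := by
    rw [Fintype.card, card_eq_sum_card_fiberwise (f := T) (fun x _ => mem_univ _)]
  rw [Finset.sum_congr rfl (fun c _ => hfib c)] at hsum
  simp only [Finset.sum_const, Finset.card_univ] at hsum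
  have h3 : Fintype.card (ZMod 3) = 3 := by decide
  have hcard : Fintype.card (Fin m → ZMod 3) = 3 ^ m := by
    rw [Fintype.card_fun, h3, Fintype.card_fin]
  rw [h3, smul_eq_mul, hcard] at hsum
  have hm1 : 1 ≤ m := by
    rcases Nat.eq_zero_or_pos m with rfl | h
    · exact absurd (Subsingleton.elim _ _) hy
    · exact h
  have hpow : 3 ^ m = 3 * 3 ^ (m - 1) := by
    conv_lhs => rw [show m = 1 + (m - 1) by omega, pow_add, pow_one]
  omega


lemma fiber_count {P : Type*} [Fintype P] [DecidableEq P] {m k : ℕ} (hm : 1 ≤ m) (hmk : m ≤ k)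
    (hP : Fintype.card P = 3 ^ k) (φ : P → Fin m → ZMod 3)
    (hbal : ∀ lam : Fin m → ZMod 3, lam ≠ 0 → ∀ c : ZMod 3,
      (univ.filter fun p => ∑ i, lam i * φ p i = c).card = 3 ^ (k - 1))
    (x0 : Fin m → ZMod 3) :
    (univ.filter fun p => φ p = x0).card = 3 ^ (k - m) := by
  have hcardfun : Fintype.card (Fin m → ZMod 3) = 3 ^ m := by
    rw [Fintype.card_fun, ZMod.card, Fintype.card_fin]
  set S : ℕ := ∑ lam : Fin m → ZMod 3,
      (univ.filter fun p => ∑ i, lam i * φ p i = ∑ i, lam i * x0 i).card with hS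
  set n : ℕ := (univ.filter fun p => φ p = x0).card with hn
  clear_value S n
  have hsplit : n + (univ.filter fun p => ¬ φ p = x0).card = 3 ^ k := by
    rw [hn, ← hP, Fintype.card]
    exact card_filter_add_card_filter_not _
  have hway1 : S + n * 3 ^ (m - 1) = n * 3 ^ m + 3 ^ k * 3 ^ (m - 1) := by
    have hswap : S = ∑ p : P,
        (univ.filter fun lam : Fin m → ZMod 3 => ∑ i, lam i * (φ p i - x0 i) = 0).card := by
      rw [hS]
      simp only [card_filter]
      rw [Finset.sum_comm]
      congr 1; ext p; congr 1; ext lam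
      congr 1
      simp only [mul_sub, Finset.sum_sub_distrib, sub_eq_zero]
    have hterm : ∀ p : P,
        (univ.filter fun lam : Fin m → ZMod 3 => ∑ i, lam i * (φ p i - x0 i) = 0).card
        = if φ p = x0 then 3 ^ m else 3 ^ (m - 1) := by
      intro p
      by_cases hp : φ p = x0
      · rw [if_pos hp]
        have : ∀ lam : Fin m → ZMod 3, ∑ i, lam i * (φ p i - x0 i) = 0 := by
          intro lam
          rw [show φ p = x0 from hp]
          simp
        rw [filter_true_of_mem (fun lam _ => this lam), card_univ, hcardfun]
      · rw [if_neg hp]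
        exact count_dual (fun i => φ p i - x0 i)
          (fun hcon => hp (funext fun i => by
            have := congrFun hcon i
            simpa [sub_eq_zero] using this))
    rw [hswap, Finset.sum_congr rfl fun p _ => hterm p, Finset.sum_ite, Finset.sum_const,
      Finset.sum_const, smul_eq_mul, smul_eq_mul]
    have hc1 : (univ.filter fun x => φ x = x0).card = n := hn.symm
    rw [hc1]
    zify at hsplit ⊢
    linear_combination (3:ℤ)^(m-1) * hsplit
  have hway2 : S + 3 ^ (k - 1) = 3 ^ k + 3 ^ m * 3 ^ (k - 1) := by
    rw [hS, ← Finset.add_sum_erase _ _ (mem_univ (0 : Fin m → ZMod 3))]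
    have hz : (univ.filter fun p : P =>
        ∑ i, (0 : Fin m → ZMod 3) i * φ p i = ∑ i, (0 : Fin m → ZMod 3) i * x0 i).card = 3 ^ k := by
      have : ∀ p : P, ∑ i, (0 : Fin m → ZMod 3) i * φ p i
          = ∑ i, (0 : Fin m → ZMod 3) i * x0 i := by intro p; simp
      rw [filter_true_of_mem (fun p _ => this p), card_univ, hP]
    rw [hz]
    rw [Finset.sum_congr rfl (fun lam hlam => hbal lam (by
        rw [mem_erase] at hlam; exact hlam.1) (∑ i, lam i * x0 i))]
    rw [Finset.sum_const, smul_eq_mul, card_erase_of_mem (mem_univ _), card_univ, hcardfun]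
    have h1 : (1:ℕ) ≤ 3 ^ m := Nat.one_le_pow _ _ (by norm_num)
    zify [h1]
    ring
  -- arithmetic over ℤ
  clear hn hS hsplit hbal
  have W3 : (S:ℤ) + n * 3 ^ (m-1) = n * 3 ^ m + 3 ^ k * 3 ^ (m-1) := by exact_mod_cast hway1
  have W4 : (S:ℤ) + 3 ^ (k-1) = 3 ^ k + 3 ^ m * 3 ^ (k-1) := by exact_mod_cast hway2
  have eA : (3:ℤ) ^ m = 3 * 3 ^ (m - 1) := by
    conv_lhs => rw [show m = 1 + (m - 1) by omega, pow_add, pow_one]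
  have eK : (3:ℤ) ^ k = 3 * 3 ^ (k - 1) := by
    conv_lhs => rw [show k = 1 + (k - 1) by omega, pow_add, pow_one]
  have eC : (3:ℤ) ^ (k-1) = 3 ^ (k-m) * 3 ^ (m-1) := by
    rw [← pow_add]; congr 1; omega
  have key : (2 * 3 ^ (m-1)) * (n:ℤ) = (2 * 3 ^ (m-1)) * 3 ^ (k-m) := by
    linear_combination W4 - W3 + ((3:ℤ)^(k-1) - n) * eA + (1 - (3:ℤ)^(m-1)) * eK + 2 * eC
  have hBne : (2 * (3:ℤ) ^ (m-1)) ≠ 0 := by positivity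
  have : (n:ℤ) = 3 ^ (k-m) := mul_left_cancel₀ hBne key
  exact_mod_cast this

/-- If a Steiner triple system on `3^k` points has 3-rank at most `3^k - r`
(for `2 ≤ r ≤ k`), then it admits a `(k,r)`-decomposition: the point set splits into
`3^(r-1)` groups of size `T = 3^(k-r+1)` indexed by `(ZMod 3)^(r-1)` such that
(i) the blocks inside each group form an STS with `T(T-1)/6` blocks, (ii) every block not
inside a single group has its three points in three distinct groups indexed by a line
`x + y + z = 0`, and (iii) for each such line the blocks meeting all three of its groups
form a transversal design `TD[3;T]`: there are `T^2` of them and every pair of points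
from two different groups of the line lies in exactly one of them. -/
theorem sts_rank_le_decomposition {P : Type*} [Fintype P] [DecidableEq P]
    (k r : ℕ) (hr : 2 ≤ r) (hk : r ≤ k)
    (hP : Fintype.card P = 3 ^ k) (B : Finset (Finset P)) (hB : IsSTS B)
    (hrank : (incMatrix3 B).rank ≤ 3 ^ k - r) :
    ∃ G : (Fin (r - 1) → ZMod 3) → Finset P,
      -- a partition of the points into groups of size `T`
      (∀ x y, x ≠ y → Disjoint (G x) (G y)) ∧
      (Finset.univ.biUnion G = Finset.univ) ∧
      (∀ x, (G x).card = 3 ^ (k - r + 1)) ∧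
      -- (i) the blocks inside a group form a sub-STS with `T(T-1)/6` blocks
      (∀ x, IsSTSOn (G x) (B.filter fun b => b ⊆ G x) ∧
        (B.filter fun b => b ⊆ G x).card =
          3 ^ (k - r + 1) * (3 ^ (k - r + 1) - 1) / 6) ∧
      -- (ii) every cross block has one point in each of the three groups of a line
      (∀ b ∈ B, (¬ ∃ x, b ⊆ G x) →
        ∃ x y z, x ≠ y ∧ x ≠ z ∧ y ≠ z ∧ x + y + z = 0 ∧
          (b ∩ G x).card = 1 ∧ (b ∩ G y).card = 1 ∧ (b ∩ G z).card = 1) ∧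
      -- (iii) the cross blocks of each line form a transversal design `TD[3;T]`
      (∀ x y z, x ≠ y → x ≠ z → y ≠ z → x + y + z = 0 →
        (B.filter fun b =>
            (b ∩ G x).Nonempty ∧ (b ∩ G y).Nonempty ∧ (b ∩ G z).Nonempty).card =
          (3 ^ (k - r + 1)) ^ 2 ∧
        ∀ u ∈ ({x, y, z} : Finset (Fin (r - 1) → ZMod 3)),
          ∀ v ∈ ({x, y, z} : Finset (Fin (r - 1) → ZMod 3)), u ≠ v →
            ∀ p ∈ G u, ∀ q ∈ G v,
              ∃! b, b ∈ B ∧ (b ∩ G x).Nonempty ∧ (b ∩ G y).Nonempty ∧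
                (b ∩ G z).Nonempty ∧ p ∈ b ∧ q ∈ b) := by
  classical
  obtain ⟨m, rfl⟩ : ∃ m, r = m + 1 := ⟨r - 1, by omega⟩
  have hm1 : 1 ≤ m := by omega
  have hmk : m ≤ k := by omega
  have hPne : Nonempty P := by
    rw [← Fintype.card_pos_iff, hP]; positivity
  -- the kernel of the incidence map
  set K := LinearMap.ker (incMatrix3 B).mulVecLin with hK
  have hker : ∀ f : P → ZMod 3, f ∈ K ↔ ∀ b ∈ B, ∑ p ∈ b, f p = 0 := by
    intro f
    rw [hK, LinearMap.mem_ker]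
    have hev : ∀ b : {b // b ∈ B}, (incMatrix3 B).mulVecLin f b = ∑ p ∈ b.1, f p := by
      intro b
      show ∑ p, incMatrix3 B b p * f p = ∑ p ∈ b.1, f p
      rw [Finset.sum_congr rfl (fun p _ => by
        show (if p ∈ b.1 then (1:ZMod 3) else 0) * f p = if p ∈ b.1 then f p else 0
        split <;> simp)]
      rw [Finset.sum_ite_mem, univ_inter]
    constructor
    · intro h b hb
      have := congrFun h (⟨b, hb⟩ : {b // b ∈ B})
      rw [hev ⟨b, hb⟩] at this
      exact this
    · intro h
      funext b
      rw [hev b]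
      exact h b.1 b.2
  have honemem : (fun _ => (1 : ZMod 3) : P → ZMod 3) ∈ K := by
    rw [hker]
    intro b hb
    rw [Finset.sum_const, hB.1 b hb]
    decide
  -- dimension of the kernel
  have hdim : m + 1 ≤ Module.finrank (ZMod 3) K := by
    have h1 := LinearMap.finrank_range_add_finrank_ker (incMatrix3 B).mulVecLin
    rw [Module.finrank_fintype_fun_eq_card, hP] at h1
    have h2 : (incMatrix3 B).rank = Module.finrank (ZMod 3) (LinearMap.range (incMatrix3 B).mulVecLin) := rfl
    have h3 : m + 1 ≤ 3 ^ k := le_trans (by omega) (le_of_lt (Nat.lt_pow_self (a := 3) (n := k) (by norm_num)))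
    rw [h2] at hrank
    rw [← hK] at h1
    omega
  -- build a linearly independent family starting with the all-ones vector
  have hstep : ∀ j : ℕ, j ≤ m → ∃ g : Fin (j + 1) → K, LinearIndependent (ZMod 3) g ∧
      g 0 = ⟨fun _ => (1 : ZMod 3), honemem⟩ := by
    intro j
    induction j with
    | zero =>
      intro _
      refine ⟨fun _ => ⟨fun _ => (1 : ZMod 3), honemem⟩, ?_, rfl⟩
      haveI : Unique (Fin (0 + 1)) := ⟨⟨0⟩, fun a => Fin.ext (by omega)⟩
      apply linearIndependent_unique_iff.mpr
      intro hcon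
      obtain ⟨p0⟩ := hPne
      have := congrFun (congrArg Subtype.val hcon) p0
      simpa using this
    | succ j ih =>
      intro hj
      obtain ⟨g, hg, hg0⟩ := ih (by omega)
      obtain ⟨x, hx⟩ := exists_linearIndependent_snoc_of_lt_finrank hg
        (lt_of_lt_of_le (by omega) hdim)
      refine ⟨Fin.snoc g x, hx, ?_⟩
      rw [show (0 : Fin (j + 2)) = Fin.castSucc 0 from rfl, Fin.snoc_castSucc, hg0]
  obtain ⟨g, hgind, hg0⟩ := hstep m le_rfl
  have hind' : LinearIndependent (ZMod 3) (fun i => ((g i : P → ZMod 3))) :=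
    hgind.map' K.subtype (Submodule.ker_subtype K)
  -- the group map
  set φ : P → Fin m → ZMod 3 := fun p i => (g i.succ : P → ZMod 3) p with hφ
  have hφsum : ∀ b ∈ B, ∀ i : Fin m, ∑ p ∈ b, φ p i = 0 := by
    intro b hb i
    have := (hker (g i.succ : P → ZMod 3)).mp (g i.succ).2 b hb
    exact this
  -- nonconstancy and balancedness of each nonzero functional
  have hbal : ∀ lam : Fin m → ZMod 3, lam ≠ 0 → ∀ c : ZMod 3,
      (univ.filter fun p => ∑ i, lam i * φ p i = c).card = 3 ^ (k - 1) := by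
    intro lam hlam c
    refine balanced hB hP _ ?_ ?_ c
    · intro b hb
      rw [Finset.sum_comm]
      refine Finset.sum_eq_zero fun i _ => ?_
      rw [← Finset.mul_sum, hφsum b hb i, mul_zero]
    · by_contra hcon
      push_neg at hcon
      obtain ⟨p0⟩ := hPne
      set c0 : ZMod 3 := ∑ i, lam i * φ p0 i with hc0
      have hall : ∀ p, ∑ i, lam i * φ p i = c0 := fun p => hcon p p0
      have hzero : ∑ j : Fin (m + 1),
          (Fin.cons (-c0) lam : Fin (m + 1) → ZMod 3) j • ((g j : P → ZMod 3)) = 0 := by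
        funext p
        rw [Finset.sum_apply]
        simp only [Pi.smul_apply, smul_eq_mul, Pi.zero_apply]
        rw [Fin.sum_univ_succ, Fin.cons_zero, hg0]
        simp only [Fin.cons_succ]
        have := hall p
        rw [hφ] at this
        simp only at this
        linear_combination this
      have hz := Fintype.linearIndependent_iff.mp hind' _ hzero
      apply hlam
      funext i
      have := hz i.succ
      rwa [Fin.cons_succ] at this
  -- the groups
  set G : (Fin m → ZMod 3) → Finset P := fun x => univ.filter fun p => φ p = x with hG
  have hGmem : ∀ (p : P) (x : Fin m → ZMod 3), p ∈ G x ↔ φ p = x := by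
    intro p x; rw [hG]; simp
  have hGcard : ∀ x, (G x).card = 3 ^ (k - m) := by
    intro x
    exact fiber_count hm1 hmk hP φ hbal x
  have hexp : k - (m + 1) + 1 = k - m := by omega
  -- sum over a block is zero
  have hφblk : ∀ p q s : P, p ≠ q → s ≠ p → s ≠ q → ({p, q, s} : Finset P) ∈ B →
      φ p + φ q + φ s = 0 := by
    intro p q s hpq hsp hsq hmem
    funext i
    have h1 := hφsum _ hmem i
    rw [sum_three hpq (Ne.symm hsp) (Ne.symm hsq) (fun t => φ t i)] at h1
    exact h1
  have hthirdval : ∀ p q s : P, p ≠ q → s ≠ p → s ≠ q → ({p, q, s} : Finset P) ∈ B →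
      φ s = -(φ p + φ q) := by
    intro p q s hpq hsp hsq hmem
    have := hφblk p q s hpq hsp hsq hmem
    linear_combination this
  have hvneg : ∀ v : Fin m → ZMod 3, -(v + v) = v := by
    intro v; funext i
    have : ∀ a : ZMod 3, -(a + a) = a := by decide
    exact this (v i)
  -- (0) disjointness
  have hGdisj : ∀ x y, x ≠ y → Disjoint (G x) (G y) := by
    intro x y hxy
    rw [Finset.disjoint_left]
    intro p hpx hpy
    rw [hGmem] at hpx hpy
    exact hxy (hpx ▸ hpy ▸ rfl)
  -- inner blocks closure
  have hclose : ∀ (x : Fin m → ZMod 3), ∀ p q : P, p ∈ G x → q ∈ G x → p ≠ q →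
      ∃ s, s ≠ p ∧ s ≠ q ∧ ({p, q, s} : Finset P) ∈ B ∧ s ∈ G x := by
    intro x p q hp hq hpq
    obtain ⟨s, hs1, hs2, hs3⟩ := exists_third hB hpq
    refine ⟨s, hs1, hs2, hs3, ?_⟩
    rw [hGmem] at hp hq ⊢
    rw [hthirdval p q s hpq hs1 hs2 hs3, hp, hq, hvneg]
  refine ⟨G, hGdisj, ?_, ?_, ?_, ?_, ?_⟩
  · -- covering
    ext p
    simp only [mem_biUnion, mem_univ, true_and, iff_true]
    exact ⟨φ p, (hGmem p (φ p)).mpr rfl⟩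
  · -- cardinalities
    intro x
    rw [hGcard x, hexp]
  · -- (i) sub-STS
    intro x
    constructor
    · constructor
      · intro b hb
        rw [mem_filter] at hb
        exact ⟨hb.2, hB.1 b hb.1⟩
      · intro p hp q hq hpq
        obtain ⟨s, hs1, hs2, hs3, hs4⟩ := hclose x p q hp hq hpq
        refine ⟨{p, q, s}, ⟨mem_filter.mpr ⟨hs3, ?_⟩, by simp, by simp⟩, ?_⟩
        · intro t ht
          rw [mem_insert, mem_insert, mem_singleton] at ht
          rcases ht with rfl | rfl | rfl
          exacts [hp, hq, hs4]
        · rintro b' ⟨hb1', hb2', hb3'⟩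
          rw [mem_filter] at hb1'
          exact block_uniq hB hpq hb1'.1 hs3 hb2' hb3' (by simp) (by simp)
    · -- block count
      set T := 3 ^ (k - (m + 1) + 1) with hT
      have hTG : (G x).card = T := by rw [hGcard x, hT, hexp]
      have hbiu : (G x).offDiag = (B.filter fun b => b ⊆ G x).biUnion (fun b => b.offDiag) := by
        ext pq
        rw [mem_offDiag, mem_biUnion]
        constructor
        · rintro ⟨hp, hq, hpq⟩
          obtain ⟨s, hs1, hs2, hs3, hs4⟩ := hclose x pq.1 pq.2 hp hq hpq
          refine ⟨{pq.1, pq.2, s}, mem_filter.mpr ⟨hs3, ?_⟩, ?_⟩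
          · intro t ht
            rw [mem_insert, mem_insert, mem_singleton] at ht
            rcases ht with rfl | rfl | rfl
            exacts [hp, hq, hs4]
          · rw [mem_offDiag]
            exact ⟨by simp, by simp, hpq⟩
        · rintro ⟨b, hb, hpq⟩
          rw [mem_filter] at hb
          rw [mem_offDiag] at hpq
          exact ⟨hb.2 hpq.1, hb.2 hpq.2.1, hpq.2.2⟩
      have hdisjb : ∀ b1 ∈ (B.filter fun b => b ⊆ G x), ∀ b2 ∈ (B.filter fun b => b ⊆ G x),
          b1 ≠ b2 → Disjoint b1.offDiag b2.offDiag := by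
        intro b1 hb1 b2 hb2 hne
        rw [Finset.disjoint_left]
        intro pq h1 h2
        rw [mem_offDiag] at h1 h2
        rw [mem_filter] at hb1 hb2
        exact hne (block_uniq hB h1.2.2 hb1.1 hb2.1 h1.1 h1.2.1 h2.1 h2.2.1)
      have hcnt : (G x).offDiag.card = ∑ b ∈ (B.filter fun b => b ⊆ G x), b.offDiag.card := by
        rw [hbiu, Finset.card_biUnion hdisjb]
      have hodc : ∀ b ∈ (B.filter fun b => b ⊆ G x), b.offDiag.card = 6 := by
        intro b hb
        rw [mem_filter] at hb
        rw [Finset.offDiag_card, hB.1 b hb.1]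
      rw [Finset.sum_congr rfl hodc, Finset.sum_const, smul_eq_mul] at hcnt
      rw [Finset.offDiag_card, hTG] at hcnt
      have hT1 : 1 ≤ T := Nat.one_le_pow _ _ (by norm_num)
      have hTT : T * (T - 1) = T * T - T := by
        cases T with
        | zero => simp
        | succ t => simp only [Nat.succ_sub_one]; ring_nf; omega
      rw [hTT]
      omega
  · -- (ii) cross blocks lie on lines
    intro b hb hnotin
    obtain ⟨p, q, s, hpq, hps, hqs, hbeq⟩ := Finset.card_eq_three.mp (hB.1 b hb)
    subst hbeq
    have hsum0 := hφblk p q s hpq (Ne.symm hps) (Ne.symm hqs) hb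
    have hsubx : ∀ x, φ p = x → φ q = x → φ s = x → False := by
      intro x h1 h2 h3
      apply hnotin
      refine ⟨x, fun t ht => ?_⟩
      rw [mem_insert, mem_insert, mem_singleton] at ht
      rw [hGmem]
      rcases ht with rfl | rfl | rfl
      exacts [h1, h2, h3]
    have hdist : φ p ≠ φ q ∧ φ p ≠ φ s ∧ φ q ≠ φ s := by
      refine ⟨?_, ?_, ?_⟩
      · intro he
        have hs' : φ s = φ p := by
          have : φ s = -(φ p + φ q) := by linear_combination hsum0
          rw [this, ← he, hvneg]
        exact hsubx (φ p) rfl he.symm hs'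
      · intro he
        have hq' : φ q = φ p := by
          have : φ q = -(φ p + φ s) := by linear_combination hsum0
          rw [this, ← he, hvneg]
        exact hsubx (φ p) rfl hq' he.symm
      · intro he
        have hp' : φ p = φ q := by
          have : φ p = -(φ q + φ s) := by linear_combination hsum0
          rw [this, ← he, hvneg]
        exact hsubx (φ q) hp' rfl he.symm
    refine ⟨φ p, φ q, φ s, hdist.1, hdist.2.1, hdist.2.2, by linear_combination hsum0, ?_, ?_, ?_⟩
    · have : ({p, q, s} : Finset P) ∩ G (φ p) = {p} := by
        ext t
        simp only [mem_inter, mem_insert, mem_singleton, hGmem]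
        constructor
        · rintro ⟨rfl | rfl | rfl, h2⟩
          · rfl
          · exact absurd h2 (Ne.symm hdist.1)
          · exact absurd h2 (Ne.symm hdist.2.1)
        · rintro rfl
          exact ⟨Or.inl rfl, rfl⟩
      rw [this, card_singleton]
    · have : ({p, q, s} : Finset P) ∩ G (φ q) = {q} := by
        ext t
        simp only [mem_inter, mem_insert, mem_singleton, hGmem]
        constructor
        · rintro ⟨rfl | rfl | rfl, h2⟩
          · exact absurd h2 hdist.1
          · rfl
          · exact absurd h2 (Ne.symm hdist.2.2)
        · rintro rfl
          exact ⟨Or.inr (Or.inl rfl), rfl⟩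
      rw [this, card_singleton]
    · have : ({p, q, s} : Finset P) ∩ G (φ s) = {s} := by
        ext t
        simp only [mem_inter, mem_insert, mem_singleton, hGmem]
        constructor
        · rintro ⟨rfl | rfl | rfl, h2⟩
          · exact absurd h2 hdist.2.1
          · exact absurd h2 hdist.2.2
          · rfl
        · rintro rfl
          exact ⟨Or.inr (Or.inr rfl), rfl⟩
      rw [this, card_singleton]
  · -- (iii) transversal designs
    intro x y z hxy hxz hyz hxyz
    have hblkex : ∀ pq : P × P, ∃ b : Finset P, pq.1 ≠ pq.2 → (b ∈ B ∧ pq.1 ∈ b ∧ pq.2 ∈ b) := by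
      intro pq
      by_cases h : pq.1 ≠ pq.2
      · obtain ⟨b, hb, -⟩ := hB.2 pq.1 pq.2 h
        exact ⟨b, fun _ => hb⟩
      · exact ⟨∅, fun h' => absurd h' h⟩
    choose blk hblk using hblkex
    have hwitness : ∀ u v : Fin m → ZMod 3, u ≠ v →
        u ∈ ({x, y, z} : Finset (Fin m → ZMod 3)) → v ∈ ({x, y, z} : Finset (Fin m → ZMod 3)) →
        ∀ p ∈ G u, ∀ q ∈ G v,
        ∃ b, (b ∈ B ∧ p ∈ b ∧ q ∈ b) ∧ (b ∩ G x).Nonempty ∧ (b ∩ G y).Nonempty ∧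
          (b ∩ G z).Nonempty := by
      intro u v huv hu hv p hp q hq
      have hpq : p ≠ q := by
        intro he
        have h1 := (hGmem p u).mp hp
        have h2 := (hGmem q v).mp hq
        rw [he, h2] at h1
        exact huv h1.symm
      obtain ⟨s, hs1, hs2, hs3⟩ := exists_third hB hpq
      have hw : φ s = -(u + v) := by
        rw [hthirdval p q s hpq hs1 hs2 hs3, (hGmem p u).mp hp, (hGmem q v).mp hq]
      have hcover : ∀ t ∈ ({x, y, z} : Finset (Fin m → ZMod 3)), t = u ∨ t = v ∨ t = -(u + v) := by
        intro t ht
        simp only [mem_insert, mem_singleton] at ht hu hv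
        rcases hu with rfl|rfl|rfl <;> rcases hv with rfl|rfl|rfl <;>
          first
          | exact absurd rfl huv
          | (rcases ht with rfl|rfl|rfl <;>
              first
              | exact Or.inl rfl
              | exact Or.inr (Or.inl rfl)
              | exact Or.inr (Or.inr (by linear_combination hxyz)))
      have hmem3 : ∀ t : Fin m → ZMod 3, t = u ∨ t = v ∨ t = -(u + v) →
          (({p, q, s} : Finset P) ∩ G t).Nonempty := by
        rintro t (rfl | rfl | rfl)
        · exact ⟨p, mem_inter.mpr ⟨by simp, hp⟩⟩
        · exact ⟨q, mem_inter.mpr ⟨by simp, hq⟩⟩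
        · exact ⟨s, mem_inter.mpr ⟨by simp, (hGmem s _).mpr hw⟩⟩
      exact ⟨{p, q, s}, ⟨hs3, by simp, by simp⟩,
        hmem3 x (hcover x (by simp)), hmem3 y (hcover y (by simp)),
        hmem3 z (hcover z (by simp))⟩
    constructor
    · -- the count
      have hbij : (G x ×ˢ G y).card
          = (B.filter fun b => (b ∩ G x).Nonempty ∧ (b ∩ G y).Nonempty ∧
              (b ∩ G z).Nonempty).card := by
        refine card_bij (fun pq _ => blk pq) ?_ ?_ ?_
        · intro pq hpq'
          rw [mem_product] at hpq'
          have hne : pq.1 ≠ pq.2 := by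
            intro he
            have h1 := (hGmem pq.1 x).mp hpq'.1
            have h2 := (hGmem pq.2 y).mp hpq'.2
            rw [he, h2] at h1
            exact hxy h1.symm
          obtain ⟨hbB, hpb, hqb⟩ := hblk pq hne
          obtain ⟨bb, ⟨hbB2, hpb2, hqb2⟩, h1, h2, h3⟩ :=
            hwitness x y hxy (by simp) (by simp) pq.1 hpq'.1 pq.2 hpq'.2
          have heqb : blk pq = bb := block_uniq hB hne hbB hbB2 hpb hqb hpb2 hqb2
          rw [mem_filter]
          show blk pq ∈ B ∧ (blk pq ∩ G x).Nonempty ∧ (blk pq ∩ G y).Nonempty ∧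
            (blk pq ∩ G z).Nonempty
          rw [heqb]
          exact ⟨hbB2, h1, h2, h3⟩
        · intro pq1 h1 pq2 h2 heq
          replace heq : blk pq1 = blk pq2 := heq
          rw [mem_product] at h1 h2
          have hne1 : pq1.1 ≠ pq1.2 := by
            intro he
            have ha := (hGmem pq1.1 x).mp h1.1
            have hb' := (hGmem pq1.2 y).mp h1.2
            rw [he, hb'] at ha
            exact hxy ha.symm
          have hne2 : pq2.1 ≠ pq2.2 := by
            intro he
            have ha := (hGmem pq2.1 x).mp h2.1
            have hb' := (hGmem pq2.2 y).mp h2.2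
            rw [he, hb'] at ha
            exact hxy ha.symm
          obtain ⟨hbB1, hp1, hq1⟩ := hblk pq1 hne1
          obtain ⟨hbB2, hp2, hq2⟩ := hblk pq2 hne2
          rw [heq] at hbB1 hp1 hq1
          by_cases hxx : pq1.1 = pq2.1
          · by_cases hyy : pq1.2 = pq2.2
            · exact Prod.ext hxx hyy
            · exfalso
              obtain ⟨s, hs1, hs2, hs3, hs4⟩ := hclose y pq1.2 pq2.2 h1.2 h2.2 hyy
              have hbeq : blk pq2 = {pq1.2, pq2.2, s} :=
                block_uniq hB hyy hbB1 hs3 hq1 hq2 (by simp) (by simp)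
              have hmem : pq1.1 ∈ ({pq1.2, pq2.2, s} : Finset P) := by rw [← hbeq]; exact hp1
              have hGy : pq1.1 ∈ G y := by
                rw [mem_insert, mem_insert, mem_singleton] at hmem
                rcases hmem with h' | h' | h' <;> rw [h']
                exacts [h1.2, h2.2, hs4]
              exact Finset.disjoint_left.mp (hGdisj x y hxy) h1.1 hGy
          · exfalso
            obtain ⟨s, hs1, hs2, hs3, hs4⟩ := hclose x pq1.1 pq2.1 h1.1 h2.1 hxx
            have hbeq : blk pq2 = {pq1.1, pq2.1, s} :=
              block_uniq hB hxx hbB1 hs3 hp1 hp2 (by simp) (by simp)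
            have hmem : pq1.2 ∈ ({pq1.1, pq2.1, s} : Finset P) := by rw [← hbeq]; exact hq1
            have hGx : pq1.2 ∈ G x := by
              rw [mem_insert, mem_insert, mem_singleton] at hmem
              rcases hmem with h' | h' | h' <;> rw [h']
              exacts [h1.1, h2.1, hs4]
            exact Finset.disjoint_left.mp (hGdisj x y hxy) hGx h1.2
        · intro b hbC
          rw [mem_filter] at hbC
          obtain ⟨hbB, ⟨p, hp⟩, ⟨q, hq⟩, -⟩ := hbC
          rw [mem_inter] at hp hq
          have hne : p ≠ q := by
            intro he
            have ha := (hGmem p x).mp hp.2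
            have hb' := (hGmem q y).mp hq.2
            rw [he, hb'] at ha
            exact hxy ha.symm
          refine ⟨(p, q), mem_product.mpr ⟨hp.2, hq.2⟩, ?_⟩
          obtain ⟨hbB', hpb', hqb'⟩ := hblk (p, q) hne
          exact block_uniq hB hne hbB' hbB hpb' hqb' hp.1 hq.1
      rw [← hbij, card_product, hGcard, hGcard, hexp, sq]
    · -- uniqueness
      intro u hu v hv huv p hp q hq
      obtain ⟨b, ⟨hbB, hpb, hqb⟩, h1, h2, h3⟩ := hwitness u v huv hu hv p hp q hq
      have hpq : p ≠ q := by
        intro he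
        have ha := (hGmem p u).mp hp
        have hb' := (hGmem q v).mp hq
        rw [he, hb'] at ha
        exact huv ha.symm
      refine ⟨b, ⟨hbB, h1, h2, h3, hpb, hqb⟩, ?_⟩
      rintro b' ⟨hb'B, -, -, -, hpb', hqb'⟩
      exact block_uniq hB hpq hb'B hbB hpb' hqb' hpb hqb
end
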